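/- arXiv:1802.09475 — 7 statements merged into one kernel-verified Lean document; each statement's English description precedes it below -/
import Mathlib

section
/- Let λ > 0 and α ∈ [0,1). Then the function U_{λ,α} satisfies the singular Liouville equation Δ U_{λ,α}(x) + |x|^{-2α} · e^{U_{λ,α}(x)} = 0 at every point x ∈ ℝ² with x ≠ 0, where Δ denotes the Laplacian Δu = ∂²u/∂x₁² + ∂²u/∂x₂². -/
open Real MeasureTheory Metric Filter Topology RealInnerProductSpace

noncomputable section

/-- The plane `ℝ²`. -/
abbrev Pl := EuclideanSpace ℝ (Fin 2)

/-- The Laplacian `Δu = ∂²u/∂x₁² + ∂²u/∂x₂²` of a function on `ℝ²`. -/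
def lap (u : Pl → ℝ) (x : Pl) : ℝ :=
  ∑ i : Fin 2, fderiv ℝ (fun y => fderiv ℝ u y (EuclideanSpace.single i 1)) x
    (EuclideanSpace.single i 1)

/-- The radial profile of `U_{λ,α}`. -/
def Uval (lam a r : ℝ) : ℝ :=
  Real.log ((lam * (1 - a)) ^ 2 / (1 + lam ^ 2 / 8 * r ^ (2 * (1 - a))) ^ 2)

/-- `U_{λ,α}(x) = ln( (λ(1−α))² / (1 + (λ²/8)|x|^{2(1−α)})² )`. -/
def U (lam a : ℝ) (x : Pl) : ℝ := Uval lam a ‖x‖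

set_option maxHeartbeats 1000000 in
/-- For `0 < λ` and `α ∈ [0,1)`, the function `U_{λ,α}` satisfies the singular
Liouville equation at every `x ≠ 0`. -/
theorem singular_liouville_bubble (lam a : ℝ) (hlam : 0 < lam) (ha : a ∈ Set.Ico (0:ℝ) 1)
    (x : Pl) (hx : x ≠ 0) :
    lap (U lam a) x + ‖x‖ ^ (-(2*a)) * Real.exp (U lam a x) = 0 := by
  obtain ⟨ha0, ha1⟩ := ha
  have hγ : (0:ℝ) < 1 - a := by linarith
  set γ : ℝ := 1 - a with hγdef
  set c : ℝ := lam ^ 2 / 8 with hcdef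
  have hc : 0 < c := by rw [hcdef]; positivity
  have hA : 0 < (lam * γ) ^ 2 := by positivity
  -- squared norm as rpow
  have hsq : ∀ y : Pl, ‖y‖ ^ (2 * γ) = ((‖y‖ ^ 2 : ℝ)) ^ γ := by
    intro y
    rw [← Real.rpow_two, ← Real.rpow_mul (norm_nonneg y)]
  -- the profile as a function of the squared norm
  set φ : ℝ → ℝ := fun s => Real.log ((lam * γ) ^ 2) - 2 * Real.log (1 + c * s ^ γ)
    with hφdef
  have hUeq : U lam a = fun y : Pl => φ (‖y‖ ^ 2) := by
    funext y
    have hD : (0:ℝ) < 1 + c * ((‖y‖ ^ 2 : ℝ)) ^ γ := by positivity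
    simp only [U, Uval, φ, ← hγdef, ← hcdef, hsq y]
    rw [Real.log_div hA.ne' (by positivity)]
    simp only [Real.log_pow]
    push_cast
    ring
  -- derivative of the 2-norm-square map
  have hNd : ∀ y : Pl, HasFDerivAt (fun z : Pl => ‖z‖ ^ 2) (2 • (innerSL ℝ y)) y := by
    intro y
    simpa using (hasFDerivAt_id y).norm_sq
  -- first derivative of φ
  set φ1 : ℝ → ℝ := fun s => -(2 * (c * (γ * s ^ (γ - 1)) / (1 + c * s ^ γ))) with hφ1def
  have hφ' : ∀ s : ℝ, 0 < s → HasDerivAt φ (φ1 s) s := by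
    intro s hs
    have hD : (0:ℝ) < 1 + c * s ^ γ := by positivity
    have h1 : HasDerivAt (fun z : ℝ => 1 + c * z ^ γ) (c * (γ * s ^ (γ - 1))) s :=
      ((Real.hasDerivAt_rpow_const (Or.inl hs.ne')).const_mul c).const_add 1
    have h2 := (h1.log hD.ne').const_mul (2:ℝ)
    have h3 := h2.const_sub (Real.log ((lam * γ) ^ 2))
    simpa [hφdef, hφ1def, mul_div_assoc] using h3
  -- second derivative of φ
  set φ2 : ℝ → ℝ := fun s =>
    -(2 * ((c * (γ * ((γ - 1) * s ^ (γ - 2))) * (1 + c * s ^ γ)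
        - c * (γ * s ^ (γ - 1)) * (c * (γ * s ^ (γ - 1)))) / (1 + c * s ^ γ) ^ 2))
    with hφ2def
  have hφ'' : ∀ s : ℝ, 0 < s → HasDerivAt φ1 (φ2 s) s := by
    intro s hs
    have hD : (0:ℝ) < 1 + c * s ^ γ := by positivity
    have hn : HasDerivAt (fun z : ℝ => c * (γ * z ^ (γ - 1)))
        (c * (γ * ((γ - 1) * s ^ (γ - 2)))) s := by
      have h := ((Real.hasDerivAt_rpow_const (p := γ - 1) (Or.inl hs.ne')).const_mul
        γ).const_mul c
      have he : γ - 1 - 1 = γ - 2 := by ring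
      simpa [he] using h
    have hd : HasDerivAt (fun z : ℝ => 1 + c * z ^ γ) (c * (γ * s ^ (γ - 1))) s :=
      ((Real.hasDerivAt_rpow_const (Or.inl hs.ne')).const_mul c).const_add 1
    have hq := hn.div hd hD.ne'
    have := (hq.const_mul (2:ℝ)).neg
    simpa [hφ1def, hφ2def, mul_div_assoc, Pi.neg_def] using this
  -- first fderiv of U at a nonzero point
  have hUy : ∀ y : Pl, y ≠ 0 →
      HasFDerivAt (U lam a) (φ1 (‖y‖ ^ 2) • (2 • innerSL ℝ y)) y := by
    intro y hy
    have hs : 0 < ‖y‖ ^ 2 := by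
      have := norm_pos_iff.mpr hy
      positivity
    have := (hφ' _ hs).comp_hasFDerivAt y (hNd y)
    rw [hUeq]
    exact this
  -- pointwise formula for directional derivatives
  have hg : ∀ i : Fin 2, ∀ y : Pl, y ≠ 0 →
      fderiv ℝ (U lam a) y (EuclideanSpace.single i 1) = φ1 (‖y‖ ^ 2) * (2 * y i) := by
    intro i y hy
    rw [(hUy y hy).fderiv]
    simp only [ContinuousLinearMap.smul_apply, innerSL_apply_apply,
      EuclideanSpace.inner_single_right, conj_trivial, smul_eq_mul, nsmul_eq_mul,
      Nat.cast_ofNat, one_mul]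
  have hs : 0 < ‖x‖ ^ 2 := by
    have := norm_pos_iff.mpr hx
    positivity
  set s : ℝ := ‖x‖ ^ 2 with hsdef
  -- second derivative terms
  have hterm : ∀ i : Fin 2,
      fderiv ℝ (fun y => fderiv ℝ (U lam a) y (EuclideanSpace.single i 1)) x
        (EuclideanSpace.single i 1)
      = φ1 s * 2 + 2 * x i * (φ2 s * (2 * x i)) := by
    intro i
    have hev : (fun y => fderiv ℝ (U lam a) y (EuclideanSpace.single i 1))
        =ᶠ[𝓝 x] fun y : Pl => φ1 (‖y‖ ^ 2) * (2 * y i) := by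
      filter_upwards [isOpen_compl_singleton.mem_nhds hx] with y hy
      exact hg i y hy
    have hcomp : HasFDerivAt (fun y : Pl => φ1 (‖y‖ ^ 2))
        (φ2 s • (2 • innerSL ℝ x)) x := by
        have := (hφ'' _ hs).comp_hasFDerivAt x (hNd x); exact this
    have hproj : HasFDerivAt (fun y : Pl => 2 * y i)
        ((2:ℝ) • (EuclideanSpace.proj i : Pl →L[ℝ] ℝ)) x :=
      (EuclideanSpace.proj i : Pl →L[ℝ] ℝ).hasFDerivAt.const_mul 2
    have hmul : HasFDerivAt (fun y : Pl => φ1 (‖y‖ ^ 2) * (2 * y i)) _ x := hcomp.mul hproj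
    rw [hev.fderiv_eq, hmul.fderiv]
    simp only [ContinuousLinearMap.add_apply, ContinuousLinearMap.smul_apply,
      innerSL_apply_apply, EuclideanSpace.inner_single_right, conj_trivial, smul_eq_mul,
      nsmul_eq_mul, Nat.cast_ofNat, one_mul]
    have hps : (EuclideanSpace.proj i : Pl →L[ℝ] ℝ) (EuclideanSpace.single i 1) = 1 := by
      show (EuclideanSpace.single i (1:ℝ) : Pl) i = 1
      simp [EuclideanSpace.single_apply]
    rw [hps]
    ring
  have hlap : lap (U lam a) x = 4 * φ1 s + 4 * (φ2 s * s) := by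
    rw [lap, Fin.sum_univ_two, hterm 0, hterm 1]
    have hxs : s = x 0 ^ 2 + x 1 ^ 2 := by
      rw [hsdef, PiLp.norm_sq_eq_of_L2, Fin.sum_univ_two]
      simp [Real.norm_eq_abs, sq_abs]
    rw [hxs]; ring
  -- the nonlinear term
  have hDx : (0:ℝ) < 1 + c * s ^ γ := by positivity
  have hexp : Real.exp (U lam a x) = (lam * γ) ^ 2 / (1 + c * s ^ γ) ^ 2 := by
    rw [hUeq]
    show Real.exp (φ (‖x‖ ^ 2)) = _
    rw [← hsdef, hφdef]
    show Real.exp (Real.log ((lam * γ) ^ 2) - 2 * Real.log (1 + c * s ^ γ)) = _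
    rw [show (2:ℝ) * Real.log (1 + c * s ^ γ) = Real.log ((1 + c * s ^ γ) ^ 2) by
        rw [Real.log_pow]; norm_num,
      Real.exp_sub, Real.exp_log hA, Real.exp_log (pow_pos hDx 2)]
  have hpow : ‖x‖ ^ (-(2 * a)) = s ^ (-a) := by
    rw [show -(2 * a) = 2 * (-a) by ring, Real.rpow_mul (norm_nonneg x), Real.rpow_two,
      hsdef]
  rw [hlap, hexp, hpow]
  -- final algebra
  set t : ℝ := s ^ (-a) with htdef
  have h1 : s ^ (γ - 1) = t := by rw [htdef, hγdef]; norm_num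
  have h2 : s ^ (γ - 2) = t / s := by
    rw [show γ - 2 = (γ - 1) - 1 by ring, Real.rpow_sub hs, Real.rpow_one, h1]
  have h3 : s ^ γ = s * t := by
    rw [htdef, show γ = 1 + (-a) by rw [hγdef]; ring, Real.rpow_add hs, Real.rpow_one]
  rw [hφ1def, hφ2def]
  simp only [h1, h2, h3]
  have hD' : (0:ℝ) < 1 + c * (s * t) := by rw [← h3]; exact hDx
  rw [hcdef, hγdef]
  field_simp
  ring
end
end

section
/- Let λ > 0, α ∈ [0,1) and R > 0. Then ∫_{B_R(0)} |x|^{-2α} e^{U_{λ,α}(x)} dx = 8π(1−α) · λ²R^{2(1−α)} / (8 + λ²R^{2(1−α)}), where the integral is with respect to two-dimensional Lebesgue measure on the open ball B_R(0) ⊂ ℝ². -/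
open Real MeasureTheory Metric Filter Topology RealInnerProductSpace

noncomputable section

lemma oneD (lam a R : ℝ) (hlam : 0 < lam) (ha0 : 0 ≤ a) (ha1 : a < 1) (hR : 0 < R) :
    ∫ r in Set.Ioo (0:ℝ) R, r * (r ^ (-(2*a)) * Real.exp (Uval lam a r))
      = 4 * (1-a) * (lam^2 * R^(2*(1-a)) / (8 + lam^2 * R^(2*(1-a)))) := by
  have h1a : 0 < 1 - a := by linarith
  set c : ℝ := 2 * (1 - a) with hc_def
  have hc : 0 < c := by positivity
  set F : ℝ → ℝ := fun r => -(4*(1-a)) / (1 + lam^2/8 * r ^ c) with hF_def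
  have hDpos : ∀ r : ℝ, 0 ≤ r → 0 < 1 + lam^2/8 * r ^ c := by
    intro r hr
    have : 0 ≤ lam^2/8 * r ^ c := by positivity
    linarith
  have hderiv : ∀ r ∈ Set.Ioo (0:ℝ) R,
      HasDerivAt F (r * (r ^ (-(2*a)) * Real.exp (Uval lam a r))) r := by
    intro r hr
    have hr0 : 0 < r := hr.1
    have hD : 0 < 1 + lam^2/8 * r ^ c := hDpos r hr0.le
    have h1 : HasDerivAt (fun s : ℝ => s ^ c) (c * r ^ (c - 1)) r :=
      Real.hasDerivAt_rpow_const (Or.inl hr0.ne')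
    have h2 : HasDerivAt (fun s : ℝ => 1 + lam^2/8 * s ^ c)
        (lam^2/8 * (c * r ^ (c - 1))) r := (h1.const_mul _).const_add 1
    have h3 := (h2.inv hD.ne').const_mul (-(4*(1-a)))
    have hEq : F = fun s => -(4*(1-a)) * (1 + lam^2/8 * s ^ c)⁻¹ := by
      ext s; rw [hF_def]; ring
    rw [hEq]
    convert h3 using 1
    case e'_4 => exact rfl
    case e'_5 => exact rfl
    case e'_8 => exact rfl
    have hexp : Real.exp (Uval lam a r)
        = (lam * (1 - a)) ^ 2 / (1 + lam ^ 2 / 8 * r ^ c) ^ 2 := by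
      rw [Uval, Real.exp_log (by positivity)]
    rw [hexp]
    have hpow : r * r ^ (-(2*a)) = r ^ (c - 1) := by
      rw [show c - 1 = 1 + -(2*a) by rw [hc_def]; ring, Real.rpow_add hr0,
        Real.rpow_one]
    rw [← mul_assoc, hpow, hc_def]
    field_simp
    ring
  have hcont : ContinuousOn F (Set.Icc 0 R) := by
    apply ContinuousOn.div continuousOn_const
    · apply ContinuousOn.add continuousOn_const
      exact ContinuousOn.mul continuousOn_const
        (fun r _ => (Real.continuousAt_rpow_const r c (Or.inr hc.le)).continuousWithinAt)
    · intro r hr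
      exact (hDpos r hr.1).ne'
  have hint : IntervalIntegrable
      (fun r => r * (r ^ (-(2*a)) * Real.exp (Uval lam a r))) volume 0 R := by
    have hbig : IntervalIntegrable (fun r : ℝ => (lam * (1-a))^2 * r ^ (c - 1))
        volume 0 R := by
      apply IntervalIntegrable.const_mul
      exact intervalIntegral.intervalIntegrable_rpow' (by linarith)
    apply hbig.mono_fun
    · apply Measurable.aestronglyMeasurable
      unfold Uval
      exact measurable_id.mul ((measurable_id.pow_const _).mul
        ((Real.measurable_log.comp (measurable_const.div
          ((measurable_const.add
            ((measurable_id.pow_const _).const_mul _)).pow_const 2))).exp))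
    · rw [Filter.EventuallyLE, ae_restrict_iff' measurableSet_uIoc]
      filter_upwards with r hr
      rw [Set.uIoc_of_le hR.le] at hr
      have hr0 : 0 < r := hr.1
      have hD : 0 < 1 + lam^2/8 * r ^ c := hDpos r hr0.le
      have hexp : Real.exp (Uval lam a r)
          = (lam * (1 - a)) ^ 2 / (1 + lam ^ 2 / 8 * r ^ c) ^ 2 := by
        rw [Uval, Real.exp_log (by positivity)]
      have hpow : r * r ^ (-(2*a)) = r ^ (c - 1) := by
        rw [show c - 1 = 1 + -(2*a) by rw [hc_def]; ring, Real.rpow_add hr0,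
          Real.rpow_one]
      rw [Real.norm_eq_abs, Real.norm_eq_abs, ← mul_assoc, hpow, hexp]
      rw [abs_of_nonneg (by positivity), abs_of_nonneg (by positivity)]
      rw [mul_comm ((lam*(1-a))^2)]
      apply mul_le_mul_of_nonneg_left _ (by positivity)
      apply div_le_self (by positivity)
      have ht : 0 ≤ lam^2/8 * r ^ c := by positivity
      nlinarith [ht]
  have key : ∫ r in (0:ℝ)..R, r * (r ^ (-(2*a)) * Real.exp (Uval lam a r))
      = F R - F 0 :=
    intervalIntegral.integral_eq_sub_of_hasDeriv_right_of_le hR.le hcont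
      (fun x hx => (hderiv x hx).hasDerivWithinAt) hint
  rw [← MeasureTheory.integral_Ioc_eq_integral_Ioo,
    ← intervalIntegral.integral_of_le hR.le, key]
  simp only [hF_def]
  have h0 : (0:ℝ) ^ c = 0 := Real.zero_rpow hc.ne'
  have hDR : 0 < 1 + lam^2/8 * R ^ c := hDpos R hR.le
  have h8 : 0 < 8 + lam^2 * R ^ c := by
    have : 0 ≤ lam^2 * R ^ c := by positivity
    linarith
  rw [h0]
  rw [hc_def] at hDR h8 ⊢
  field_simp
  ring


/-- The mass of the bubble `U_{λ,α}` on the ball `B_R(0)`. -/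
theorem bubble_mass_ball (lam a R : ℝ) (hlam : 0 < lam) (ha : a ∈ Set.Ico (0:ℝ) 1)
    (hR : 0 < R) :
    ∫ x in ball (0 : Pl) R, ‖x‖ ^ (-(2*a)) * Real.exp (U lam a x)
      = 8 * π * (1 - a) * (lam ^ 2 * R ^ (2*(1-a)) / (8 + lam ^ 2 * R ^ (2*(1-a)))) := by
  obtain ⟨ha0, ha1⟩ := ha
  set g : ℝ → ℝ := fun r => r ^ (-(2*a)) * Real.exp (Uval lam a r) with hg
  have h1 : (∫ x in ball (0 : Pl) R, ‖x‖ ^ (-(2*a)) * Real.exp (U lam a x))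
      = ∫ x : Pl, Set.indicator (Set.Iio R) g ‖x‖ := by
    rw [← integral_indicator measurableSet_ball]
    congr 1
    ext x
    classical
    simp only [Set.indicator_apply, mem_ball_zero_iff, Set.mem_Iio]
    rfl
  rw [h1, integral_fun_norm_addHaar (volume : Measure Pl)
    (Set.indicator (Set.Iio R) g)]
  have hdim : Module.finrank ℝ Pl = 2 := finrank_euclideanSpace_fin
  rw [hdim]
  have hvol : volume.real (ball (0 : Pl) 1) = π := by
    rw [measureReal_def, EuclideanSpace.volume_ball]
    simp only [Fintype.card_fin, Nat.cast_ofNat]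
    rw [show ((2:ℝ)/2 + 1) = 2 by norm_num, Real.Gamma_two, Real.sq_sqrt Real.pi_pos.le]
    simp [Real.pi_pos.le]
  rw [hvol]
  have h2 : ∀ y : ℝ, y ^ (2-1) • Set.indicator (Set.Iio R) g y
      = Set.indicator (Set.Iio R) (fun y => y * g y) y := by
    intro y
    simp only [Set.indicator_apply, smul_eq_mul, pow_one]
    split <;> simp
  simp only [h2]
  rw [setIntegral_indicator measurableSet_Iio, Set.Ioi_inter_Iio,
    oneD lam a R hlam ha0 ha1 hR]
  rw [smul_eq_mul, nsmul_eq_mul]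
  push_cast
  ring
end
end

section
/- Let λ > 0 and α ∈ [0,1). Then ∫_{ℝ²} |x|^{-2α} e^{U_{λ,α}(x)} dx = 8π(1−α), where the integral is with respect to two-dimensional Lebesgue measure. -/
open Real MeasureTheory Metric Filter Topology RealInnerProductSpace

noncomputable section

lemma one_dim_integral (lam a : ℝ) (hlam : 0 < lam) (ha1 : a < 1) :
    ∫ y in Set.Ioi (0:ℝ), y ^ (1:ℕ) • (y ^ (-(2*a)) * Real.exp (Uval lam a y))
      = 4 * (1 - a) := by
  have hb0 : (0:ℝ) < 1 - a := by linarith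
  set g : ℝ → ℝ := fun r => -(4*(1-a)) * (1 + lam^2/8 * r^(2*(1-a)))⁻¹ with hg
  set g' : ℝ → ℝ :=
    fun r => lam^2 * (1-a)^2 * r^(2*(1-a)-1) / (1 + lam^2/8 * r^(2*(1-a)))^2 with hg'
  have hden : ∀ r : ℝ, 0 ≤ r → 0 < 1 + lam^2/8 * r^(2*(1-a)) := by
    intro r hr
    have : 0 ≤ r^(2*(1-a)) := Real.rpow_nonneg hr _
    positivity
  have hderiv : ∀ r ∈ Set.Ioi (0:ℝ), HasDerivAt g (g' r) r := by
    intro r hr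
    have hr0 : (0:ℝ) < r := hr
    have h1 : HasDerivAt (fun r : ℝ => r ^ (2*(1-a))) (2*(1-a) * r^(2*(1-a)-1)) r :=
      Real.hasDerivAt_rpow_const (Or.inl hr0.ne')
    have h2 : HasDerivAt (fun r : ℝ => 1 + lam^2/8 * r^(2*(1-a)))
        (lam^2/8 * (2*(1-a) * r^(2*(1-a)-1))) r := (h1.const_mul _).const_add 1
    have h3 := (h2.inv (hden r hr0.le).ne').const_mul (-(4*(1-a)))
    refine h3.congr_deriv ?_
    simp only [hg']
    have hD := (hden r hr0.le).ne'
    field_simp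
    ring
  have hpos : ∀ r ∈ Set.Ioi (0:ℝ), 0 ≤ g' r := by
    intro r hr
    have hr0 : (0:ℝ) < r := hr
    have h1 : 0 < r^(2*(1-a)-1) := Real.rpow_pos_of_pos hr0 _
    have h2 := hden r hr0.le
    simp only [hg']
    positivity
  have hcont : ContinuousWithinAt g (Set.Ici 0) 0 := by
    have h1 : ContinuousAt (fun r : ℝ => r ^ (2*(1-a))) 0 :=
      Real.continuousAt_rpow_const 0 (2*(1-a)) (Or.inr (by positivity))
    have hc : ContinuousAt (fun r : ℝ => 1 + lam^2/8 * r^(2*(1-a))) 0 :=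
      (continuousAt_const.mul h1).const_add 1
    have hne : 1 + lam^2/8 * (0:ℝ)^(2*(1-a)) ≠ 0 := (hden 0 le_rfl).ne'
    exact (continuousAt_const.mul (hc.inv₀ hne)).continuousWithinAt
  have htend : Tendsto g atTop (𝓝 0) := by
    have t1 : Tendsto (fun r : ℝ => r^(2*(1-a))) atTop atTop :=
      tendsto_rpow_atTop (by positivity)
    have t2 : Tendsto (fun r : ℝ => 1 + lam^2/8 * r^(2*(1-a))) atTop atTop :=
      tendsto_atTop_add_const_left _ 1 (t1.const_mul_atTop (by positivity))
    have t3 := t2.inv_tendsto_atTop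
    have t4 := t3.const_mul (-(4*(1-a)))
    rw [show (0:ℝ) = -(4*(1-a)) * 0 by ring]; exact t4
  have key := integral_Ioi_of_hasDerivAt_of_nonneg hcont hderiv hpos htend
  have heq : Set.EqOn (fun y : ℝ => y ^ (1:ℕ) • (y ^ (-(2*a)) * Real.exp (Uval lam a y)))
      g' (Set.Ioi 0) := by
    intro y hy
    have hy0 : (0:ℝ) < y := hy
    have hdy := hden y hy0.le
    have hexp : Real.exp (Uval lam a y)
        = (lam*(1-a))^2 / (1 + lam^2/8 * y^(2*(1-a)))^2 := by
      rw [Uval, Real.exp_log (by positivity)]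
    have hy2 : y * y^(-(2*a)) = y^(2*(1-a)-1) := by
      rw [show (2*(1-a)-1 : ℝ) = 1 + (-(2*a)) by ring, Real.rpow_add hy0, Real.rpow_one]
    simp only [smul_eq_mul, pow_one, hexp, hg']
    rw [← hy2, mul_pow]
    ring
  rw [MeasureTheory.setIntegral_congr_fun measurableSet_Ioi heq, key]
  have : g 0 = -(4*(1-a)) := by
    simp [hg, Real.zero_rpow (by positivity : (2*(1-a):ℝ) ≠ 0)]
  rw [this]
  ring

/-- The total mass of the bubble `U_{λ,α}` on `ℝ²` is `8π(1−α)`. -/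
theorem bubble_total_mass (lam a : ℝ) (hlam : 0 < lam) (ha : a ∈ Set.Ico (0:ℝ) 1) :
    ∫ x : Pl, ‖x‖ ^ (-(2*a)) * Real.exp (U lam a x) = 8 * π * (1 - a) := by
  obtain ⟨ha0, ha1⟩ := ha
  have hball : (volume (ball (0:Pl) 1)).toReal = π := by
    rw [EuclideanSpace.volume_ball]
    simp only [Fintype.card_fin]
    rw [show ((2:ℕ):ℝ)/2 + 1 = 2 by norm_num, Real.Gamma_two]
    rw [Real.sq_sqrt pi_pos.le]
    simp [ENNReal.toReal_ofReal pi_pos.le, ENNReal.ofReal_one]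
  simp only [U]
  rw [MeasureTheory.integral_fun_norm_addHaar (volume : Measure Pl)
    (fun r : ℝ => r ^ (-(2*a)) * Real.exp (Uval lam a r))]
  rw [show Module.finrank ℝ Pl = 2 from finrank_euclideanSpace_fin]
  rw [measureReal_def, hball]
  rw [show (2 - 1 : ℕ) = 1 from rfl]
  rw [one_dim_integral lam a hlam ha1]
  simp [smul_eq_mul]
  ring
end
end

section
/- (Mass dichotomy, Lemma 2.5.) Let α ∈ [0,1), R > 0, and let λ₂ > λ₁ > 0 be such that U_{λ₁,α} and U_{λ₂,α} take the same value at points of norm R. Let g : [0,R] → ℝ satisfy the interior radial Bol hypothesis with parameter α, and suppose g(R) equals the common value of U_{λ₁,α} and U_{λ₂,α} at points of norm R. Set M = 2π∫₀^R s^{1−2α} e^{g(s)} ds and m_i = ∫_{B_R(0)} |x|^{-2α} e^{U_{λ_i,α}(x)} dx for i = 1,2. Then either M ≤ m₁ or M ≥ m₂. -/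
open Real MeasureTheory Metric Filter Topology RealInnerProductSpace

noncomputable section

/-- `g` satisfies the interior radial Bol hypothesis with parameter `a` on `[0,R]`:
it is continuous and strictly decreasing on `[0,R]`, differentiable on `(0,R)`, and
`2πr·(−g'(r)) ≤ 2π∫₀^r s^{1−2a} e^{g(s)} ds` for every `r ∈ (0,R)`. -/
def InteriorBol (a R : ℝ) (g : ℝ → ℝ) : Prop :=
  ContinuousOn g (Set.Icc 0 R) ∧ StrictAntiOn g (Set.Icc 0 R) ∧
  (∀ r ∈ Set.Ioo (0:ℝ) R, DifferentiableAt ℝ g r) ∧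
  (∀ r ∈ Set.Ioo (0:ℝ) R,
    2 * π * r * (-(deriv g r)) ≤ 2 * π * ∫ s in (0:ℝ)..r, s ^ (1 - 2*a) * Real.exp (g s))

namespace MassDichotomyAux

lemma cancel_aux {A c p D X : ℝ} (hc : c ≠ 0) (hp : p ≠ 0) (hD : D ≠ 0) :
    X * (A / D^2) = -(A/(c*p)) * (-(c*(p*X))/D^2) := by
  field_simp

lemma final_aux {lam al T q : ℝ} (hl : lam ≠ 0) (ha : al ≠ 0) (hD : 1 + lam^2/8*T ≠ 0) :
    2 * (q * (-((lam*al)^2/(lam^2/8*(2*al))) * (1 + lam^2/8*T)⁻¹ - -((lam*al)^2/(lam^2/8*(2*al)))))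
      = 8*q*al*(lam^2/8*T)/(1+lam^2/8*T) := by
  have h8 : (8:ℝ) + lam^2*T ≠ 0 := by
    intro h; apply hD; linarith [h]
  field_simp [h8]
  ring


/-- Positivity of the denominator in `Uval`. -/
lemma den_pos {lam a r : ℝ} (hr : 0 ≤ r) (hl : 0 < lam) :
    0 < 1 + lam ^ 2 / 8 * r ^ (2 * (1 - a)) := by
  have h : (0:ℝ) ≤ r ^ (2 * (1 - a)) := Real.rpow_nonneg hr _
  nlinarith [sq_nonneg lam]

lemma exp_Uval {lam a r : ℝ} (hr : 0 ≤ r) (hl : 0 < lam) (ha1 : a < 1) :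
    Real.exp (Uval lam a r)
      = (lam * (1 - a)) ^ 2 / (1 + lam ^ 2 / 8 * r ^ (2 * (1 - a))) ^ 2 := by
  have hden := den_pos (a := a) hr hl
  have hnum : 0 < (lam * (1 - a)) ^ 2 := pow_pos (by nlinarith) 2
  exact Real.exp_log (div_pos hnum (pow_pos hden 2))

/-- Integrability of `s^(1-2a) * φ s` on `[0,R]` for continuous `φ`. -/
lemma integrable_aux {a R : ℝ} (ha1 : a < 1) (hR : 0 ≤ R) {φ : ℝ → ℝ}
    (hφ : ContinuousOn φ (Set.Icc 0 R)) :
    IntervalIntegrable (fun s => s ^ (1 - 2*a) * φ s) volume 0 R := by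
  obtain ⟨C, hC⟩ := isCompact_Icc.exists_bound_of_continuousOn hφ
  have hrpow : IntervalIntegrable (fun s : ℝ => s ^ (1 - 2*a) * C) volume 0 R :=
    (intervalIntegral.intervalIntegrable_rpow' (by linarith)).mul_const C
  have huIoc : Set.uIoc (0:ℝ) R = Set.Ioc 0 R := Set.uIoc_of_le hR
  refine hrpow.mono_fun ?_ ?_
  · rw [huIoc]
    have hcont : ContinuousOn (fun s : ℝ => s ^ (1 - 2*a) * φ s) (Set.Ioc 0 R) := by
      refine ContinuousOn.mul ?_ (hφ.mono Set.Ioc_subset_Icc_self)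
      intro x hx
      exact (Real.continuousAt_rpow_const x _ (Or.inl (ne_of_gt hx.1))).continuousWithinAt
    exact hcont.aestronglyMeasurable measurableSet_Ioc
  · rw [huIoc]
    filter_upwards [ae_restrict_mem measurableSet_Ioc] with x hx
    have hx0 : (0:ℝ) ≤ x ^ (1 - 2*a) := Real.rpow_nonneg hx.1.le _
    have hb : |φ x| ≤ C := hC x ⟨hx.1.le, hx.2⟩
    have hC0 : 0 ≤ C := le_trans (abs_nonneg _) hb
    simp only [Real.norm_eq_abs, abs_mul, abs_of_nonneg hx0]
    exact mul_le_mul_of_nonneg_left (le_trans hb (le_abs_self C)) hx0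

lemma master {a R : ℝ} (ha1 : a < 1) (hR : 0 < R) {g : ℝ → ℝ}
    (hg : InteriorBol a R g) :
    2*(1-a) * (∫ s in (0:ℝ)..R, s ^ (1 - 2*a) * Real.exp (g s))
      - (∫ s in (0:ℝ)..R, s ^ (1 - 2*a) * Real.exp (g s))^2 / 2
      ≤ R ^ (2*(1-a)) * Real.exp (g R) := by
  obtain ⟨hcont, hanti, hdiff, hbol⟩ := hg
  set f : ℝ → ℝ := fun s => s ^ (1 - 2*a) * Real.exp (g s) with hf
  set N : ℝ → ℝ := fun r => ∫ s in (0:ℝ)..r, f s with hN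
  have hint : IntervalIntegrable f volume 0 R :=
    integrable_aux ha1 hR.le (Real.continuous_exp.comp_continuousOn hcont)
  have hintr : ∀ r ∈ Set.Icc (0:ℝ) R, IntervalIntegrable f volume 0 r := fun r hr =>
    hint.mono_set (by rw [Set.uIcc_of_le hr.1, Set.uIcc_of_le hR.le]
                      exact Set.Icc_subset_Icc le_rfl hr.2)
  have hfcont : ContinuousOn f (Set.Ioo 0 R) := by
    refine ContinuousOn.mul ?_ ?_
    · intro x hx
      exact (Real.continuousAt_rpow_const x _ (Or.inl (ne_of_gt hx.1))).continuousWithinAt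
    · intro x hx
      exact (Real.continuous_exp.continuousAt.comp (hdiff x hx).continuousAt).continuousWithinAt
  have hNderiv : ∀ r ∈ Set.Ioo (0:ℝ) R, HasDerivAt N (f r) r := fun r hr =>
    intervalIntegral.integral_hasDerivAt_right (hintr r ⟨hr.1.le, hr.2.le⟩)
      (hfcont.stronglyMeasurableAtFilter isOpen_Ioo r hr)
      (hfcont.continuousAt (isOpen_Ioo.mem_nhds hr))
  have hNcont : ContinuousOn N (Set.Icc 0 R) := by
    have h := intervalIntegral.continuousOn_primitive_interval
      ((intervalIntegrable_iff' (f := f)).mp hint)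
    rwa [Set.uIcc_of_le hR.le] at h
  set H : ℝ → ℝ := fun r => r ^ (2*(1-a)) * Real.exp (g r) - (2*(1-a) * N r - (N r)^2/2)
    with hH
  have hHcont : ContinuousOn H (Set.Icc 0 R) := by
    refine ContinuousOn.sub ?_ ?_
    · exact ((Real.continuous_rpow_const (by linarith)).continuousOn).mul
        (Real.continuous_exp.comp_continuousOn hcont)
    · exact (continuousOn_const.mul hNcont).sub ((hNcont.pow 2).div_const 2)
  have hd : ∀ r ∈ Set.Ioo (0:ℝ) R,
      HasDerivAt H (r ^ (1-2*a) * Real.exp (g r) * (r * deriv g r + N r)) r := by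
    intro r hr
    have h1 : HasDerivAt (fun x : ℝ => x ^ (2*(1-a))) (2*(1-a) * r ^ (2*(1-a)-1)) r :=
      Real.hasDerivAt_rpow_const (Or.inl hr.1.ne')
    have h2 : HasDerivAt (fun x => Real.exp (g x)) (Real.exp (g r) * deriv g r) r :=
      ((hdiff r hr).hasDerivAt).exp
    have h3 := hNderiv r hr
    have h4 := (h1.mul h2).sub ((h3.const_mul (2*(1-a))).sub ((h3.pow 2).div_const 2))
    refine h4.congr_deriv ?_
    have e1 : r ^ (2*(1-a)-1) = r ^ (1-2*a) := by rw [show 2*(1-a)-1 = 1-2*a from by ring]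
    have e2 : r ^ (2*(1-a)) = r ^ (1-2*a) * r := by
      rw [show 2*(1-a) = (1-2*a)+1 from by ring, Real.rpow_add hr.1, Real.rpow_one]
    rw [e1, e2]
    simp only [hf]
    push_cast
    ring
  have hd0 : ∀ r ∈ Set.Ioo (0:ℝ) R,
      0 ≤ r ^ (1-2*a) * Real.exp (g r) * (r * deriv g r + N r) := by
    intro r hr
    have hb : 2 * π * r * (-(deriv g r)) ≤ 2 * π * N r := hbol r hr
    have hpi := Real.pi_pos
    have h5 : 0 ≤ r * deriv g r + N r := by nlinarith
    exact mul_nonneg (mul_nonneg (Real.rpow_nonneg hr.1.le _) (Real.exp_pos _).le) h5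
  have hmono : MonotoneOn H (Set.Icc 0 R) := by
    refine monotoneOn_of_deriv_nonneg (convex_Icc 0 R) hHcont ?_ ?_
    · rw [interior_Icc]
      intro r hr
      exact (hd r hr).differentiableAt.differentiableWithinAt
    · rw [interior_Icc]
      intro r hr
      rw [(hd r hr).deriv]
      exact hd0 r hr
  have h00 : H 0 = 0 := by
    simp only [hH, hN]
    rw [intervalIntegral.integral_same, Real.zero_rpow (ne_of_gt (by linarith : (0:ℝ) < 2*(1-a)))]
    ring
  have hfin := hmono (Set.left_mem_Icc.mpr hR.le) (Set.right_mem_Icc.mpr hR.le) hR.le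
  rw [h00] at hfin
  simp only [hH, hN] at hfin
  linarith

lemma polar {a R lam : ℝ} (ha1 : a < 1) (hR : 0 < R) (hl : 0 < lam) :
    ∫ x in ball (0 : Pl) R, ‖x‖ ^ (-(2*a)) * Real.exp (U lam a x)
      = 8 * π * (1-a) * (lam^2/8 * R ^ (2*(1-a))) / (1 + lam^2/8 * R ^ (2*(1-a))) := by
  have hne1 : (lam:ℝ) ≠ 0 := hl.ne'
  have hne2 : (1:ℝ) - a ≠ 0 := by intro h; nlinarith
  have hden : ∀ y : ℝ, 0 ≤ y → 0 < 1 + lam^2/8 * y ^ (2*(1-a)) := fun y hy =>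
    den_pos hy hl
  set f : ℝ → ℝ := fun y => y ^ (-(2*a)) * Real.exp (Uval lam a y) with hfdef
  have step1 : (∫ x in ball (0 : Pl) R, ‖x‖ ^ (-(2*a)) * Real.exp (U lam a x))
      = ∫ x : Pl, (Set.Iio R).indicator f ‖x‖ := by
    rw [← MeasureTheory.integral_indicator measurableSet_ball]
    congr 1
    funext x
    by_cases h : ‖x‖ < R
    · simp [Set.indicator_apply, mem_ball_zero_iff, h, U, hfdef]
    · simp [Set.indicator_apply, mem_ball_zero_iff, h, U, hfdef]
  rw [step1, MeasureTheory.integral_fun_norm_addHaar volume ((Set.Iio R).indicator f)]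
  have hvol : (volume (ball (0:Pl) 1)).toReal = π := by
    rw [EuclideanSpace.volume_ball]
    have h2 : ((Fintype.card (Fin 2)) : ℝ) / 2 + 1 = 2 := by
      simp [Fintype.card_fin]; norm_num
    rw [h2, Real.Gamma_two]
    simp [Real.sq_sqrt Real.pi_pos.le]
    exact Real.pi_pos.le
  have hfr : Module.finrank ℝ Pl = 2 := finrank_euclideanSpace_fin
  rw [hfr, measureReal_def, hvol]
  have hind : ∀ y : ℝ, y ^ (2 - 1) • (Set.Iio R).indicator f y
      = (Set.Iio R).indicator (fun y => y * f y) y := by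
    intro y
    by_cases h : y ∈ Set.Iio R <;> simp [Set.indicator_apply, h]
  rw [show (∫ y in Set.Ioi (0:ℝ), y ^ (2 - 1) • (Set.Iio R).indicator f y)
      = ∫ y in Set.Ioi (0:ℝ), (Set.Iio R).indicator (fun y => y * f y) y from
    MeasureTheory.integral_congr_ae (Filter.Eventually.of_forall hind)]
  rw [MeasureTheory.setIntegral_indicator measurableSet_Iio, Set.Ioi_inter_Iio]
  have step4 : (∫ y in Set.Ioo (0:ℝ) R, y * f y) = ∫ y in (0:ℝ)..R, y * f y := by
    rw [intervalIntegral.integral_of_le hR.le, MeasureTheory.integral_Ioc_eq_integral_Ioo]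
  rw [step4]
  -- FTC
  set G : ℝ → ℝ := fun y => -((lam*(1-a))^2/(lam^2/8 * (2*(1-a))))
      * (1 + lam^2/8 * y ^ (2*(1-a)))⁻¹ with hGdef
  have hGcont : ContinuousOn G (Set.Icc 0 R) := by
    refine ContinuousOn.mul continuousOn_const (ContinuousOn.inv₀ ?_ ?_)
    · exact continuousOn_const.add (continuousOn_const.mul
        ((Real.continuous_rpow_const (by linarith)).continuousOn))
    · intro y hy; exact (hden y hy.1).ne'
  have hGderiv : ∀ y ∈ Set.Ioo (0:ℝ) R, HasDerivAt G (y * f y) y := by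
    intro y hy
    have hDne : (1 + lam^2/8 * y ^ (2*(1-a))) ≠ 0 := (hden y hy.1.le).ne'
    have h1 : HasDerivAt (fun y : ℝ => 1 + lam^2/8 * y ^ (2*(1-a)))
        (lam^2/8 * (2*(1-a) * y ^ (2*(1-a)-1))) y :=
      ((Real.hasDerivAt_rpow_const (Or.inl hy.1.ne')).const_mul (lam^2/8)).const_add 1
    have h2 := (h1.inv hDne).const_mul (-((lam*(1-a))^2/(lam^2/8 * (2*(1-a)))))
    refine h2.congr_deriv ?_
    symm
    have e1 : Real.exp (Uval lam a y)
        = (lam * (1-a))^2 / (1 + lam^2/8 * y ^ (2*(1-a)))^2 := exp_Uval hy.1.le hl ha1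
    have e2 : y ^ (2*(1-a)-1) = y * y ^ (-(2*a)) := by
      rw [show 2*(1-a)-1 = 1 + -(2*a) from by ring, Real.rpow_add hy.1, Real.rpow_one]
    simp only [hfdef]
    rw [e1, e2, ← mul_assoc]
    exact cancel_aux (by positivity) (by intro h; nlinarith) (hden y hy.1.le).ne'
  have hIf : IntervalIntegrable (fun y => y * f y) volume 0 R := by
    have hφ : ContinuousOn
        (fun y : ℝ => (lam*(1-a))^2 / (1 + lam^2/8 * y ^ (2*(1-a)))^2) (Set.Icc 0 R) := by
      refine ContinuousOn.div continuousOn_const ?_ ?_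
      · exact (continuousOn_const.add (continuousOn_const.mul
          ((Real.continuous_rpow_const (by linarith)).continuousOn))).pow 2
      · intro y hy; exact pow_ne_zero 2 (hden y hy.1).ne'
    have h0 := integrable_aux ha1 hR.le hφ
    rw [intervalIntegrable_iff] at h0 ⊢
    refine h0.congr ?_
    rw [Set.uIoc_of_le hR.le]
    filter_upwards [MeasureTheory.ae_restrict_mem measurableSet_Ioc] with y hy
    have e3 : (y:ℝ) ^ (1-2*a) = y * y ^ (-(2*a)) := by
      rw [show 1-2*a = 1 + -(2*a) from by ring, Real.rpow_add hy.1, Real.rpow_one]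
    simp only [hfdef]
    rw [e3, exp_Uval hy.1.le hl ha1]
    ring
  rw [intervalIntegral.integral_eq_sub_of_hasDeriv_right_of_le hR.le hGcont
      (fun y hy => (hGderiv y hy).hasDerivWithinAt) hIf]
  have hG0 : G 0 = -((lam*(1-a))^2/(lam^2/8 * (2*(1-a)))) := by
    simp only [hGdef]
    rw [Real.zero_rpow (by intro h; nlinarith : 2*(1-a) ≠ 0)]
    norm_num
  rw [hG0]
  simp only [hGdef]
  rw [nsmul_eq_mul, smul_eq_mul]
  push_cast
  exact final_aux hne1 hne2 (hden R hR.le).ne'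

lemma dichotomy_alg {q al N s1 s2 : ℝ} (hq : 0 < q) (hal : 0 < al) (hs1 : 0 < s1)
    (h12 : s1 * s2 = 1) (hlt : s1 < s2)
    (hM : 2*al*N - N^2/2 ≤ 8*al^2*s1/(1+s1)^2) :
    2*q*N ≤ 8*q*al*s1/(1+s1) ∨ 2*q*N ≥ 8*q*al*s2/(1+s2) := by
  by_contra hcon
  push_neg at hcon
  obtain ⟨hA, hB⟩ := hcon
  have hu1 : (0:ℝ) < 1 + s1 := by linarith
  have hs2 : (0:ℝ) < s2 := lt_trans hs1 hlt
  have hu2 : (0:ℝ) < 1 + s2 := by linarith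
  have hA' : 8*q*al*s1 < 2*q*N*(1+s1) := by
    have := (div_lt_iff₀ hu1).mp hA; linarith
  have hB' : 2*q*N*(1+s1) < 8*q*al := by
    have h0 : 8*q*al*s2/(1+s2) = 8*q*al/(1+s1) := by
      rw [div_eq_div_iff hu2.ne' hu1.ne']; linear_combination (8*q*al)*h12
    rw [h0] at hB
    have := (lt_div_iff₀ hu1).mp hB; linarith
  have F1 : 8*al*s1 < 2*N*(1+s1) := by
    have hA'' : q * (8*al*s1) < q * (2*N*(1+s1)) := by nlinarith [hA']
    exact lt_of_mul_lt_mul_left hA'' hq.le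
  have F2 : 2*N*(1+s1) < 8*al := by
    have hB'' : q * (2*N*(1+s1)) < q * (8*al) := by nlinarith [hB']
    exact lt_of_mul_lt_mul_left hB'' hq.le
  have hM' : (2*al*N - N^2/2)*(1+s1)^2 ≤ 8*al^2*s1 := (le_div_iff₀ (pow_pos hu1 2)).mp hM
  nlinarith [mul_pos (sub_pos.mpr F2) (sub_pos.mpr F1), hM']

end MassDichotomyAux

/-- Mass dichotomy (Lemma 2.5): either `M ≤ m₁` or `M ≥ m₂`. -/
theorem mass_dichotomy (a R lam1 lam2 : ℝ) (ha : a ∈ Set.Ico (0:ℝ) 1) (hR : 0 < R)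
    (h1 : 0 < lam1) (h12 : lam1 < lam2)
    (hval : Uval lam1 a R = Uval lam2 a R)
    (g : ℝ → ℝ) (hg : InteriorBol a R g) (hgR : g R = Uval lam1 a R) :
    (2 * π * ∫ s in (0:ℝ)..R, s ^ (1 - 2*a) * Real.exp (g s))
        ≤ ∫ x in ball (0 : Pl) R, ‖x‖ ^ (-(2*a)) * Real.exp (U lam1 a x) ∨
    (2 * π * ∫ s in (0:ℝ)..R, s ^ (1 - 2*a) * Real.exp (g s))
        ≥ ∫ x in ball (0 : Pl) R, ‖x‖ ^ (-(2*a)) * Real.exp (U lam2 a x) := by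
  obtain ⟨ha0, ha1⟩ := ha
  have h2 : 0 < lam2 := h1.trans h12
  have hal : 0 < 1 - a := by linarith
  have hm1 := MassDichotomyAux.polar (a := a) (R := R) (lam := lam1) ha1 hR h1
  have hm2 := MassDichotomyAux.polar (a := a) (R := R) (lam := lam2) ha1 hR h2
  have hmaster := MassDichotomyAux.master ha1 hR hg
  have hD1 : 0 < 1 + lam1^2/8 * R ^ (2*(1-a)) := MassDichotomyAux.den_pos hR.le h1
  have hD2 : 0 < 1 + lam2^2/8 * R ^ (2*(1-a)) := MassDichotomyAux.den_pos hR.le h2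
  have hT0 : 0 < R ^ (2*(1-a)) := Real.rpow_pos_of_pos hR _
  have hexp1 := MassDichotomyAux.exp_Uval (r := R) hR.le h1 ha1
  have hexp2 := MassDichotomyAux.exp_Uval (r := R) hR.le h2 ha1
  have hvalE : (lam1*(1-a))^2/(1 + lam1^2/8 * R ^ (2*(1-a)))^2
      = (lam2*(1-a))^2/(1 + lam2^2/8 * R ^ (2*(1-a)))^2 := by
    rw [← hexp1, ← hexp2, hval]
  have hcross := (div_eq_div_iff (pow_ne_zero 2 hD1.ne') (pow_ne_zero 2 hD2.ne')).mp hvalE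
  have hc2 : (1-a)^2 * (lam1 * (1 + lam2^2/8 * R ^ (2*(1-a))))^2
      = (1-a)^2 * (lam2 * (1 + lam1^2/8 * R ^ (2*(1-a))))^2 := by
    linear_combination hcross
  have hsq := mul_left_cancel₀ (pow_ne_zero 2 hal.ne') hc2
  have hlin : lam1 * (1 + lam2^2/8 * R ^ (2*(1-a)))
      = lam2 * (1 + lam1^2/8 * R ^ (2*(1-a))) := by
    have hp1 : 0 ≤ lam1 * (1 + lam2^2/8 * R ^ (2*(1-a))) := by positivity
    have hp2 : 0 ≤ lam2 * (1 + lam1^2/8 * R ^ (2*(1-a))) := by positivity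
    exact (sq_eq_sq₀ hp1 hp2).mp hsq
  have hfac : (lam2 - lam1) * (lam1*lam2*(R ^ (2*(1-a)))/8 - 1) = 0 := by
    linear_combination hlin
  have h8 : lam1*lam2*(R ^ (2*(1-a)))/8 - 1 = 0 := by
    rcases mul_eq_zero.mp hfac with h | h
    · exact absurd (sub_eq_zero.mp h) h12.ne'
    · exact h
  have hs12 : (lam1^2/8 * R ^ (2*(1-a))) * (lam2^2/8 * R ^ (2*(1-a))) = 1 := by
    linear_combination (lam1*lam2*(R ^ (2*(1-a)))/8 + 1) * h8
  have hslt : lam1^2/8 * R ^ (2*(1-a)) < lam2^2/8 * R ^ (2*(1-a)) := by nlinarith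
  have hmaster' : 2*(1-a) * (∫ s in (0:ℝ)..R, s ^ (1 - 2*a) * Real.exp (g s))
      - (∫ s in (0:ℝ)..R, s ^ (1 - 2*a) * Real.exp (g s))^2/2
      ≤ 8*(1-a)^2*(lam1^2/8 * R ^ (2*(1-a)))/(1 + lam1^2/8 * R ^ (2*(1-a)))^2 := by
    have e : R ^ (2*(1-a)) * Real.exp (g R)
        = 8*(1-a)^2*(lam1^2/8 * R ^ (2*(1-a)))/(1 + lam1^2/8 * R ^ (2*(1-a)))^2 := by
      rw [hgR, hexp1]
      ring
    rw [e] at hmaster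
    linarith [hmaster]
  rw [hm1, hm2]
  exact MassDichotomyAux.dichotomy_alg Real.pi_pos hal (by positivity) hs12 hslt hmaster'
end
end

section
/- (Exterior mass sandwich, Lemma 2.6.) Let α ∈ [0,1), R > 0, and let λ₂ > λ₁ > 0 be such that U_{λ₁,α} and U_{λ₂,α} take the same value at points of norm R. Let g : [R,∞) → ℝ satisfy the exterior radial Bol hypothesis with parameter α, with exterior mass function m(r) = 2π∫_r^∞ s^{1−2α} e^{g(s)} ds, suppose m(R) < 8π(1−α), and suppose g(R) equals the common value of U_{λ₁,α} and U_{λ₂,α} at points of norm R. Then ∫_{ℝ²∖B_R(0)} |x|^{-2α} e^{U_{λ₂,α}(x)} dx ≤ m(R) ≤ ∫_{ℝ²∖B_R(0)} |x|^{-2α} e^{U_{λ₁,α}(x)} dx. -/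
open Real MeasureTheory Metric Filter Topology RealInnerProductSpace
open Set

noncomputable section

/-- `g` satisfies the exterior radial Bol hypothesis with parameter `a` on `[R,∞)`:
it is continuous and strictly decreasing on `[R,∞)`, differentiable on `(R,∞)`, the
exterior mass `m(r) = 2π∫_r^∞ s^{1−2a} e^{g(s)} ds` is finite for every `r ≥ R`, and
`2πr·(−g'(r)) ≤ 8π(1−a) − m(r)` for every `r ∈ (R,∞)`. -/
def ExteriorBol (a R : ℝ) (g : ℝ → ℝ) : Prop :=
  ContinuousOn g (Set.Ici R) ∧ StrictAntiOn g (Set.Ici R) ∧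
  (∀ r ∈ Set.Ioi R, DifferentiableAt ℝ g r) ∧
  (∀ r ∈ Set.Ici R, IntegrableOn (fun s => s ^ (1 - 2*a) * Real.exp (g s)) (Set.Ioi r)) ∧
  (∀ r ∈ Set.Ioi R,
    2 * π * r * (-(deriv g r)) ≤
      8 * π * (1 - a) - 2 * π * ∫ s in Set.Ioi r, s ^ (1 - 2*a) * Real.exp (g s))

theorem polar_compl (f : ℝ → ℝ) (R : ℝ) (hR : 0 < R) :
    ∫ x in (ball (0 : Pl) R)ᶜ, f ‖x‖ = 2 * π * ∫ r in Ioi R, r * f r := by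
  have hs : MeasurableSet ((ball (0 : Pl) R)ᶜ) := measurableSet_ball.compl
  have h1 : ∫ x in (ball (0 : Pl) R)ᶜ, f ‖x‖
      = ∫ x : Pl, (Ici R).indicator f ‖x‖ := by
    rw [← integral_indicator hs]
    congr 1
    ext x
    by_cases hx : R ≤ ‖x‖
    · simp [Set.indicator, hx, mem_ball, dist_zero_right, not_lt.2 hx]
    · simp [Set.indicator, hx, mem_ball, dist_zero_right, lt_of_not_ge hx]
  rw [h1, MeasureTheory.integral_fun_norm_addHaar volume ((Ici R).indicator f)]
  have hdim : Module.finrank ℝ Pl = 2 := by simp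
  rw [hdim]
  have hb : (volume (ball (0:Pl) 1)).toReal = π := by
    rw [EuclideanSpace.volume_ball]
    have : Real.Gamma ((Fintype.card (Fin 2) : ℝ) / 2 + 1) = 1 := by
      norm_num [Real.Gamma_two]
    rw [this]
    simp [Real.sq_sqrt Real.pi_pos.le, ENNReal.toReal_ofReal Real.pi_pos.le]
  rw [measureReal_def, hb]
  have h2 : ∫ y in Ioi (0:ℝ), y ^ (2 - 1) • (Ici R).indicator f y
      = ∫ r in Ioi R, r * f r := by
    have : ∀ y : ℝ, y ^ (2 - 1) • (Ici R).indicator f y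
        = (Ici R).indicator (fun r => r * f r) y := by
      intro y
      by_cases hy : y ∈ Ici R <;> simp [Set.indicator, hy]
    simp_rw [this]
    rw [integral_indicator measurableSet_Ici]
    rw [Measure.restrict_restrict measurableSet_Ici]
    have hin : Ici R ∩ Ioi (0:ℝ) = Ici R :=
      Set.inter_eq_left.mpr (fun y hy => lt_of_lt_of_le hR hy)
    rw [hin]
    exact MeasureTheory.integral_Ici_eq_integral_Ioi
  rw [h2]
  simp [smul_eq_mul]
  ring

theorem exp_Uval (lam a r : ℝ) (hl : 0 < lam) (ha : a < 1) (hr : 0 < r) :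
    Real.exp (Uval lam a r)
      = (lam * (1 - a)) ^ 2 / (1 + lam ^ 2 / 8 * r ^ (2 * (1 - a))) ^ 2 := by
  apply Real.exp_log
  have h1 : (0:ℝ) < lam * (1 - a) := by nlinarith
  have h2 : (0:ℝ) < 1 + lam ^ 2 / 8 * r ^ (2 * (1 - a)) := by positivity
  positivity

-- derivative of the model primitive

theorem model_hasDeriv (lam a : ℝ) (hl : 0 < lam) (ha : a < 1) (r : ℝ) (hr : 0 < r) :
    HasDerivAt (fun r : ℝ => -(4 * (1 - a)) / (1 + lam ^ 2 / 8 * r ^ (2 * (1 - a))))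
      (r ^ (1 - 2 * a) * Real.exp (Uval lam a r)) r := by
  have hp : HasDerivAt (fun r : ℝ => r ^ (2 * (1 - a)))
      (2 * (1 - a) * r ^ (2 * (1 - a) - 1)) r :=
    Real.hasDerivAt_rpow_const (Or.inl hr.ne')
  have hden : HasDerivAt (fun r : ℝ => 1 + lam ^ 2 / 8 * r ^ (2 * (1 - a)))
      (lam ^ 2 / 8 * (2 * (1 - a) * r ^ (2 * (1 - a) - 1))) r :=
    (hp.const_mul (lam ^ 2 / 8)).const_add 1
  have hdenpos : (0:ℝ) < 1 + lam ^ 2 / 8 * r ^ (2 * (1 - a)) := by positivity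
  have h := (hden.inv hdenpos.ne').const_mul (-(4 * (1 - a)))
  refine h.congr_deriv ?_
  rw [exp_Uval lam a r hl ha hr]
  have e1 : r ^ (2 * (1 - a) - 1) = r ^ (1 - 2 * a) := by ring_nf
  rw [← e1]
  field_simp
  ring

theorem model_integral (lam a R : ℝ) (hl : 0 < lam) (ha : a < 1) (hR : 0 < R) :
    ∫ r in Ioi R, r ^ (1 - 2 * a) * Real.exp (Uval lam a r)
      = 4 * (1 - a) / (1 + lam ^ 2 / 8 * R ^ (2 * (1 - a))) := by
  have key := integral_Ioi_of_hasDerivAt_of_nonneg (a := R)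
    (g := fun r : ℝ => -(4 * (1 - a)) / (1 + lam ^ 2 / 8 * r ^ (2 * (1 - a))))
    (g' := fun r => r ^ (1 - 2 * a) * Real.exp (Uval lam a r)) (l := 0)
    ((model_hasDeriv lam a hl ha R hR).continuousAt.continuousWithinAt)
    (fun x hx => model_hasDeriv lam a hl ha x (hR.trans hx))
    (fun x hx => by
      have hx0 : (0:ℝ) < x := hR.trans hx
      positivity)
    ?_
  · rw [key]
    ring
  · have h1 : Tendsto (fun r : ℝ => 1 + lam ^ 2 / 8 * r ^ (2 * (1 - a))) atTop atTop := by
      apply tendsto_atTop_add_const_left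
      apply Tendsto.const_mul_atTop (by positivity : (0:ℝ) < lam ^ 2 / 8)
      exact tendsto_rpow_atTop (by linarith)
    have h2 : Tendsto (fun r : ℝ => (1 + lam ^ 2 / 8 * r ^ (2 * (1 - a)))⁻¹) atTop (𝓝 0) :=
      h1.inv_tendsto_atTop
    have h3 := h2.const_mul (-(4 * (1 - a)))
    simpa [div_eq_mul_inv] using h3

theorem phi_nonneg (a R : ℝ) (ha1 : a < 1) (hR : 0 < R) (g : ℝ → ℝ)
    (hgc : ContinuousOn g (Set.Ici R))
    (hgd : ∀ r ∈ Set.Ioi R, DifferentiableAt ℝ g r)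
    (hint : ∀ r ∈ Set.Ici R, IntegrableOn (fun s => s ^ (1 - 2*a) * Real.exp (g s)) (Set.Ioi r))
    (hbol : ∀ r ∈ Set.Ioi R, 2*π*r*(-(deriv g r)) ≤
      8*π*(1-a) - 2*π*∫ s in Set.Ioi r, s ^ (1-2*a) * Real.exp (g s))
    (hmR : 2*π*∫ s in Set.Ioi R, s^(1-2*a)*Real.exp (g s) < 8*π*(1-a)) :
    8*π^2 * R^(2*(1-a)) * Real.exp (g R) ≤
      (2*π*∫ s in Set.Ioi R, s^(1-2*a)*Real.exp (g s)) *
        (8*π*(1-a) - 2*π*∫ s in Set.Ioi R, s^(1-2*a)*Real.exp (g s)) := by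
  set h : ℝ → ℝ := fun s => s ^ (1 - 2*a) * Real.exp (g s) with hh
  set B : ℝ := 8*π*(1-a) with hB
  set IR : ℝ := ∫ s in Set.Ioi R, h s with hIR
  set P : ℝ → ℝ := fun r => ∫ s in R..r, h s with hP
  -- continuity of h on Ici R
  have hhc : ContinuousOn h (Set.Ici R) := by
    apply ContinuousOn.mul
    · intro s hs
      exact (Real.continuousAt_rpow_const s _ (Or.inl (hR.trans_le hs).ne')).continuousWithinAt
    · exact Real.continuous_exp.comp_continuousOn hgc
  have hhpos : ∀ s, R ≤ s → 0 < h s := by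
    intro s hs
    have : (0:ℝ) < s := hR.trans_le hs
    positivity
  -- interval integrability of h between points ≥ R
  have hii : ∀ r, R ≤ r → IntervalIntegrable h volume R r := by
    intro r hr
    rw [intervalIntegrable_iff_integrableOn_Ioc_of_le hr]
    exact (hint R Set.self_mem_Ici).mono_set Set.Ioc_subset_Ioi_self
  -- tail integral as IR - P r
  have hMeq : ∀ r, R ≤ r → (∫ s in Set.Ioi r, h s) = IR - P r := by
    intro r hr
    have hdisj : Disjoint (Set.Ioc R r) (Set.Ioi r) := Set.Ioc_disjoint_Ioi le_rfl
    have hunion : Set.Ioc R r ∪ Set.Ioi r = Set.Ioi R := Set.Ioc_union_Ioi_eq_Ioi hr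
    have h1 : IR = (∫ s in Set.Ioc R r, h s) + ∫ s in Set.Ioi r, h s := by
      rw [hIR, ← hunion]
      exact setIntegral_union hdisj measurableSet_Ioi
        ((hint R Set.self_mem_Ici).mono_set Set.Ioc_subset_Ioi_self)
        (hint r (Set.mem_Ici.mpr hr))
    rw [hP]
    simp only [intervalIntegral.integral_of_le hr]
    linarith
  -- derivative of P
  have hPd : ∀ r ∈ Set.Ioi R, HasDerivAt P (h r) r := by
    intro r hr
    apply intervalIntegral.integral_hasDerivAt_right (hii r (le_of_lt hr))
    · exact (hhc.mono (Set.Ioi_subset_Ici le_rfl)).stronglyMeasurableAtFilter isOpen_Ioi r hr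
    · exact (hhc r (Set.mem_Ici.mpr hr.le)).continuousAt (Ici_mem_nhds hr)
  -- continuity of P on Ici R
  have hPc : ContinuousOn P (Set.Ici R) := by
    intro x hx
    have hcw : ContinuousWithinAt P (Set.Icc R (x+1)) x := by
      apply intervalIntegral.continuousWithinAt_primitive (measure_singleton x)
      have : min R R = R := min_self R
      rw [this, max_eq_right (by linarith [Set.mem_Ici.mp hx] : R ≤ x + 1)]
      exact hii (x+1) (by linarith [Set.mem_Ici.mp hx])
    apply hcw.mono_of_mem_nhdsWithin
    have : Set.Icc R (x+1) = Set.Ici R ∩ Set.Iic (x+1) := (Set.Ici_inter_Iic).symm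
    rw [this]
    exact Filter.inter_mem self_mem_nhdsWithin
      (mem_nhdsWithin_of_mem_nhds (Iic_mem_nhds (by linarith [Set.mem_Ici.mp hx])))
  set M : ℝ → ℝ := fun r => 2*π*(IR - P r) with hM
  set Phi : ℝ → ℝ := fun r => M r * (B - M r) - 8*π^2 * r^(2*(1-a)) * Real.exp (g r) with hPhi
  have hMc : ContinuousOn M (Set.Ici R) := continuousOn_const.mul (continuousOn_const.sub hPc)
  have hPhic : ContinuousOn Phi (Set.Ici R) := by
    apply ContinuousOn.sub
    · exact hMc.mul (continuousOn_const.sub hMc)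
    · apply ContinuousOn.mul
      · apply ContinuousOn.mul continuousOn_const
        intro s hs
        exact (Real.continuousAt_rpow_const s _ (Or.inl (hR.trans_le hs).ne')).continuousWithinAt
      · exact Real.continuous_exp.comp_continuousOn hgc
  -- derivative of Phi
  have hPhid : ∀ r ∈ Set.Ioi R, HasDerivAt Phi
      ((-(2*π*h r)) * (B - M r) + M r * (2*π*h r)
        - 8*π^2 * ((2*(1-a) * r^(2*(1-a)-1)) * Real.exp (g r)
            + r^(2*(1-a)) * (Real.exp (g r) * deriv g r))) r := by
    intro r hr
    have hMd : HasDerivAt M (-(2*π*h r)) r := by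
      have := ((hPd r hr).const_sub IR).const_mul (2*π)
      refine this.congr_deriv ?_
      ring
    have hgd' : HasDerivAt g (deriv g r) r := (hgd r hr).hasDerivAt
    have hexp : HasDerivAt (fun r => Real.exp (g r)) (Real.exp (g r) * deriv g r) r := by
      simpa [mul_comm] using hgd'.exp
    have hrp : HasDerivAt (fun r : ℝ => r ^ (2*(1-a))) (2*(1-a) * r^(2*(1-a)-1)) r :=
      Real.hasDerivAt_rpow_const (Or.inl (hR.trans hr).ne')
    have h2 : HasDerivAt (fun r => 8*π^2 * r^(2*(1-a)) * Real.exp (g r))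
        (8*π^2 * ((2*(1-a) * r^(2*(1-a)-1)) * Real.exp (g r)
            + r^(2*(1-a)) * (Real.exp (g r) * deriv g r))) r := by
      have := ((hrp.const_mul (8*π^2)).mul hexp)
      refine this.congr_deriv ?_
      ring
    have h1 : HasDerivAt (fun r => M r * (B - M r))
        ((-(2*π*h r)) * (B - M r) + M r * (2*π*h r)) r := by
      have := hMd.mul (hMd.const_sub B)
      refine this.congr_deriv ?_
      ring
    exact h1.sub h2
  -- deriv Phi ≤ 0 on Ioi R
  have hderivle : ∀ r ∈ Set.Ioi R, deriv Phi r ≤ 0 := by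
    intro r hr
    rw [(hPhid r hr).deriv]
    have hr0 : (0:ℝ) < r := hR.trans hr
    have hbolr := hbol r hr
    rw [hMeq r hr.le] at hbolr
    have hq : (0:ℝ) < r ^ (1-2*a) := Real.rpow_pos_of_pos hr0 _
    have hE : (0:ℝ) < Real.exp (g r) := Real.exp_pos _
    have e1 : r ^ (2*(1-a)-1) = r ^ (1-2*a) := by ring_nf
    have e2 : r ^ (2*(1-a)) = r * r ^ (1-2*a) := by
      rw [show (2*(1-a) : ℝ) = 1 + (1-2*a) by ring, Real.rpow_add hr0, Real.rpow_one]
    rw [e1, e2]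
    have hhr : h r = r ^ (1-2*a) * Real.exp (g r) := rfl
    have key := mul_le_mul_of_nonneg_left hbolr
      (show (0:ℝ) ≤ 2*π*(r^(1-2*a))*Real.exp (g r) by positivity)
    have hMr : M r = 2*π*(IR - P r) := rfl
    rw [hB] at key
    rw [hhr, hB, hMr]
    nlinarith [key, Real.pi_pos]
  -- Phi is antitone on Ici R
  have hanti : AntitoneOn Phi (Set.Ici R) := by
    apply antitoneOn_of_deriv_nonpos (convex_Ici R) hPhic
    · intro r hr
      rw [interior_Ici] at hr
      exact (hPhid r hr).differentiableAt.differentiableWithinAt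
    · intro r hr
      rw [interior_Ici] at hr
      exact hderivle r hr
  -- M bounds
  have hMnonneg : ∀ r, R ≤ r → 0 ≤ M r := by
    intro r hr
    have : (0:ℝ) ≤ ∫ s in Set.Ioi r, h s :=
      setIntegral_nonneg measurableSet_Ioi (fun s hs => (hhpos s (hr.trans hs.le)).le)
    rw [hMeq r hr] at this
    have hpi : (0:ℝ) < π := Real.pi_pos
    simp only [hM]
    nlinarith
  have hMle : ∀ r, R ≤ r → M r ≤ M R := by
    intro r hr
    have h1 : (0:ℝ) ≤ P r := by
      rw [hP]
      simp only [intervalIntegral.integral_of_le hr]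
      exact setIntegral_nonneg measurableSet_Ioc (fun s hs => (hhpos s hs.1.le).le)
    have hpi : (0:ℝ) < π := Real.pi_pos
    have hPR : P R = 0 := intervalIntegral.integral_same
    simp only [hM, hPR]
    nlinarith
  have hMRB : M R < B := by
    have hPR : P R = 0 := intervalIntegral.integral_same
    simp only [hM, hPR]
    simpa using hmR
  -- Phi R is nonnegative
  have hPhiR : 0 ≤ Phi R := by
    by_contra h0
    push_neg at h0
    set d : ℝ := -Phi R with hd
    have hdpos : 0 < d := by simp only [hd]; linarith
    have hlow : ∀ r, r ∈ Set.Ioi R → d ≤ 8*π^2 * (r * h r) := by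
      intro r hr
      have hPhir : Phi r ≤ Phi R := hanti Set.self_mem_Ici (Set.mem_Ici.mpr hr.le) hr.le
      have hq1 : 0 ≤ M r * (B - M r) := by
        have := hMnonneg r hr.le
        have := hMle r hr.le
        nlinarith [hMRB]
      have e2 : r ^ (2*(1-a)) = r * r ^ (1-2*a) := by
        rw [show (2*(1-a) : ℝ) = 1 + (1-2*a) by ring, Real.rpow_add (hR.trans hr), Real.rpow_one]
      have : Phi r = M r * (B - M r) - 8*π^2 * (r * h r) := by
        simp only [hPhi, e2, hh]
        ring
      rw [this] at hPhir
      simp only [hd] at hPhir ⊢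
      linarith
    have hcontr : IntegrableOn (fun r : ℝ => r ^ (-(1:ℝ))) (Set.Ioi R) := by
      apply Integrable.mono' (((hint R Set.self_mem_Ici).const_mul (8*π^2/d)))
      · apply ContinuousOn.aestronglyMeasurable _ measurableSet_Ioi
        intro s hs
        exact (Real.continuousAt_rpow_const s _ (Or.inl (hR.trans hs).ne')).continuousWithinAt
      · filter_upwards [self_mem_ae_restrict (measurableSet_Ioi : MeasurableSet (Set.Ioi R))]
          with r hr
        have hr0 : (0:ℝ) < r := hR.trans hr
        have h1 := hlow r hr
        rw [Real.norm_eq_abs, abs_of_pos (Real.rpow_pos_of_pos hr0 _), Real.rpow_neg_one]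
        rw [div_mul_eq_mul_div, le_div_iff₀ hdpos]
        have h2 : r⁻¹ * d * r = d := by field_simp
        calc r⁻¹ * d = r⁻¹ * d * r * r⁻¹ := by field_simp
          _ = d * r⁻¹ := by rw [h2]
          _ ≤ 8*π^2 * (r * h r) * r⁻¹ := by
              apply mul_le_mul_of_nonneg_right h1 (by positivity)
          _ = 8*π^2 * h r := by field_simp
    rw [integrableOn_Ioi_rpow_iff hR] at hcontr
    linarith
  -- conclude
  have hPR : P R = 0 := intervalIntegral.integral_same
  have : Phi R = 2*π*IR * (B - 2*π*IR) - 8*π^2 * R^(2*(1-a)) * Real.exp (g R) := by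
    simp only [hPhi, hM, hPR]
    ring
  linarith [hPhiR, this.symm.le, this.le]

set_option maxHeartbeats 2000000 in
/-- Exterior mass sandwich (Lemma 2.6). -/
theorem exterior_mass_sandwich (a R lam1 lam2 : ℝ) (ha : a ∈ Set.Ico (0:ℝ) 1) (hR : 0 < R)
    (h1 : 0 < lam1) (h12 : lam1 < lam2)
    (hval : Uval lam1 a R = Uval lam2 a R)
    (g : ℝ → ℝ) (hg : ExteriorBol a R g)
    (hmR : 2 * π * ∫ s in Set.Ioi R, s ^ (1 - 2*a) * Real.exp (g s) < 8 * π * (1 - a))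
    (hgR : g R = Uval lam1 a R) :
    (∫ x in (ball (0 : Pl) R)ᶜ, ‖x‖ ^ (-(2*a)) * Real.exp (U lam2 a x))
        ≤ 2 * π * ∫ s in Set.Ioi R, s ^ (1 - 2*a) * Real.exp (g s) ∧
    (2 * π * ∫ s in Set.Ioi R, s ^ (1 - 2*a) * Real.exp (g s))
        ≤ ∫ x in (ball (0 : Pl) R)ᶜ, ‖x‖ ^ (-(2*a)) * Real.exp (U lam1 a x) := by
  obtain ⟨ha0, ha1⟩ := ha
  obtain ⟨hgc, hgsa, hgd, hint, hbol⟩ := hg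
  have h2 : 0 < lam2 := h1.trans h12
  have hpi : (0:ℝ) < π := Real.pi_pos
  obtain ⟨T, hT⟩ : ∃ t : ℝ, R ^ (2*(1-a)) = t := ⟨_, rfl⟩
  have hTpos : 0 < T := hT ▸ Real.rpow_pos_of_pos hR _
  obtain ⟨D1, hD1⟩ : ∃ d : ℝ, 1 + lam1^2/8 * T = d := ⟨_, rfl⟩
  obtain ⟨D2, hD2⟩ : ∃ d : ℝ, 1 + lam2^2/8 * T = d := ⟨_, rfl⟩
  have hD1pos : 0 < D1 := hD1 ▸ (by nlinarith [hTpos, sq_nonneg lam1])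
  have hD2pos : 0 < D2 := hD2 ▸ (by nlinarith [hTpos, sq_nonneg lam2])
  -- the product relation
  have hprod : lam1 * lam2 * T = 8 := by
    have e1 : Real.exp (Uval lam1 a R) = Real.exp (Uval lam2 a R) := by rw [hval]
    rw [exp_Uval lam1 a R h1 ha1 hR, exp_Uval lam2 a R h2 ha1 hR] at e1
    rw [hT, hD1, hD2] at e1
    rw [div_eq_div_iff (pow_ne_zero 2 hD1pos.ne') (pow_ne_zero 2 hD2pos.ne')] at e1
    have h4 : (lam1 * (1-a) * D2) ^ 2 = (lam2 * (1-a) * D1) ^ 2 := by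
      linear_combination e1
    have p1 : 0 ≤ lam1 * (1-a) * D2 :=
      mul_nonneg (mul_nonneg h1.le (by linarith)) hD2pos.le
    have p2 : 0 ≤ lam2 * (1-a) * D1 :=
      mul_nonneg (mul_nonneg h2.le (by linarith)) hD1pos.le
    have h5 : lam1 * (1-a) * D2 = lam2 * (1-a) * D1 := by
      apply le_antisymm
      · nlinarith [h4, p1, p2]
      · nlinarith [h4, p1, p2]
    have h6 : (1-a) * (lam1 * D2 - lam2 * D1) = 0 := by linear_combination h5
    rcases mul_eq_zero.mp h6 with h | h
    · linarith
    have h7 : lam1 * D2 = lam2 * D1 := by linarith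
    rw [← hD1, ← hD2] at h7
    have h8 : (lam1 - lam2) * (8 - lam1*lam2*T) = 0 := by linear_combination 8 * h7
    rcases mul_eq_zero.mp h8 with h' | h'
    · linarith
    · linarith
  -- rewrite the two planar integrals
  have hpolar : ∀ lam : ℝ, 0 < lam →
      (∫ x in (ball (0 : Pl) R)ᶜ, ‖x‖ ^ (-(2*a)) * Real.exp (U lam a x))
        = 8*π*(1-a) / (1 + lam^2/8 * T) := by
    intro lam hlam
    have key : (∫ x in (ball (0 : Pl) R)ᶜ, ‖x‖ ^ (-(2*a)) * Real.exp (U lam a x))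
        = 2*π*∫ r in Set.Ioi R, r * (r ^ (-(2*a)) * Real.exp (Uval lam a r)) :=
      polar_compl (fun r : ℝ => r ^ (-(2*a)) * Real.exp (Uval lam a r)) R hR
    rw [key]
    have h2' : ∀ r ∈ Set.Ioi R, r * (r ^ (-(2*a)) * Real.exp (Uval lam a r))
        = r ^ (1 - 2*a) * Real.exp (Uval lam a r) := by
      intro r hr
      have hr0 : (0:ℝ) < r := hR.trans hr
      have e : r * r ^ (-(2*a)) = r ^ (1 - 2*a) := by
        nth_rewrite 1 [← Real.rpow_one r]
        rw [← Real.rpow_add hr0]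
        congr 1
      rw [← e]
      ring
    rw [setIntegral_congr_fun measurableSet_Ioi h2', model_integral lam a R hlam ha1 hR, hT]
    have hX : (0:ℝ) < 1 + lam^2/8 * T := by nlinarith [hTpos, sq_nonneg lam]
    field_simp
    ring
  obtain ⟨m, hm⟩ : ∃ x : ℝ, (2 * π * ∫ s in Set.Ioi R, s ^ (1 - 2*a) * Real.exp (g s)) = x :=
    ⟨_, rfl⟩
  rw [hpolar lam1 h1, hpolar lam2 h2, hD1, hD2, hm]
  -- the quadratic inequality
  have hquad : 8*π^2 * T * Real.exp (g R) ≤ m * (8*π*(1-a) - m) := by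
    have := phi_nonneg a R ha1 hR g hgc hgd hint hbol hmR
    rw [hT, hm] at this
    exact this
  have hEexp : Real.exp (g R) * D1^2 = (lam1*(1-a))^2 := by
    rw [hgR, exp_Uval lam1 a R h1 ha1 hR, hT, hD1]
    exact div_mul_cancel₀ _ (pow_ne_zero 2 hD1pos.ne')
  -- algebraic identities from hprod
  have hDD : D1 * D2 = D1 + D2 := by
    rw [← hD1, ← hD2]
    linear_combination ((lam1*lam2*T+8)/64) * hprod
  have hid : T*lam1^2*D2 = 8*D1 := by
    rw [← hD1, ← hD2]
    linear_combination ((lam1*lam2*T+8)/8) * hprod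
  have hBE : 8*π^2*T*Real.exp (g R) * (D1*D2) = (8*π*(1-a))^2 := by
    have h11 : (8*π^2*T*Real.exp (g R) * (D1*D2) - (8*π*(1-a))^2) * D1 = 0 := by
      linear_combination (8*π^2*T*D2)*hEexp + (π^2*(1-a)^2*8)*hid
    rcases mul_eq_zero.mp h11 with h' | h'
    · linarith
    · exact absurd h' hD1pos.ne'
  have hfact : (m*D2 - 8*π*(1-a))*(8*π*(1-a) - m*D1)
      = (m*(8*π*(1-a)-m) - 8*π^2*T*Real.exp (g R))*(D1*D2) := by
    linear_combination (-(m*(8*π*(1-a))))*hDD + hBE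
  have hge : 0 ≤ (m*D2 - 8*π*(1-a))*(8*π*(1-a) - m*D1) := by
    rw [hfact]
    apply mul_nonneg (by linarith) (mul_nonneg hD1pos.le hD2pos.le)
  have hm0 : 0 ≤ m := by
    rw [← hm]
    apply mul_nonneg (by positivity)
    apply setIntegral_nonneg measurableSet_Ioi
    intro s hs
    exact mul_nonneg (Real.rpow_nonneg (le_of_lt (hR.trans hs)) _) (Real.exp_pos _).le
  have hD12 : D1 < D2 := by
    rw [← hD1, ← hD2]
    nlinarith [hTpos, h1, h12]
  have hB0 : 0 < 8*π*(1-a) := by nlinarith [hpi]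
  constructor
  · rw [div_le_iff₀ hD2pos]
    by_contra hc
    push_neg at hc
    have h2' : 8*π*(1-a) - m*D1 ≤ 0 := by
      by_contra hc2
      push_neg at hc2
      nlinarith [mul_neg_of_neg_of_pos (by linarith : m*D2 - 8*π*(1-a) < 0) hc2]
    have hm1 : 0 < m := by nlinarith [hD1pos]
    nlinarith [mul_lt_mul_of_pos_left hD12 hm1]
  · rw [le_div_iff₀ hD1pos]
    by_contra hc
    push_neg at hc
    have h2' : m*D2 - 8*π*(1-a) ≤ 0 := by
      by_contra hc2
      push_neg at hc2
      nlinarith [mul_pos (by linarith : 0 < m*D2 - 8*π*(1-a)) (by linarith : 0 < m*D1 - 8*π*(1-a))]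
    have hm1 : 0 < m := by nlinarith [hD1pos]
    nlinarith [mul_lt_mul_of_pos_left hD12 hm1]
end
end

section
/- (Boundary comparison, Lemma 3.1.) Let α ∈ [0,1), R > 0, λ > 0, and let g : [0,R] → ℝ satisfy the interior radial Bol hypothesis with parameter α. Suppose 2π∫₀^R s^{1−2α} e^{g(s)} ds = ∫_{B_R(0)} |x|^{-2α} e^{U_{λ,α}(x)} dx and this common value is strictly less than 8π(1−α). Then the value of U_{λ,α} at points of norm R is at most g(R), i.e. ln( (λ(1−α))² / (1 + (λ²/8) R^{2(1−α)})² ) ≤ g(R). -/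
open Real MeasureTheory Metric Filter Topology RealInnerProductSpace

noncomputable section

/-- Integrability of `s ^ p * h s` on `(0, R]` for `p > -1` and bounded measurable `h`. -/
lemma integrableOn_rpow_mul_aux {p : ℝ} (hp : -1 < p) {R C : ℝ} {h : ℝ → ℝ}
    (hm : AEStronglyMeasurable h (volume.restrict (Set.Ioc (0:ℝ) R)))
    (hb : ∀ s ∈ Set.Ioc (0:ℝ) R, |h s| ≤ C) :
    IntegrableOn (fun s => s ^ p * h s) (Set.Ioc (0:ℝ) R) := by
  have hbase : IntegrableOn (fun s : ℝ => s ^ p) (Set.Ioc (0:ℝ) R) :=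
    (intervalIntegral.intervalIntegrable_rpow' (a := 0) (b := R) hp).1
  have h2 : Integrable (fun s => h s * s ^ p) (volume.restrict (Set.Ioc (0:ℝ) R)) := by
    refine Integrable.bdd_mul (c := C) hbase hm ?_
    filter_upwards [ae_restrict_mem measurableSet_Ioc] with s hs
    simpa [Real.norm_eq_abs] using hb s hs
  exact h2.congr (ae_of_all _ fun s => mul_comm (h s) (s ^ p))

/-- Boundary comparison (Lemma 3.1). -/
theorem boundary_comparison (a R lam : ℝ) (ha : a ∈ Set.Ico (0:ℝ) 1) (hR : 0 < R)
    (hlam : 0 < lam) (g : ℝ → ℝ) (hg : InteriorBol a R g)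
    (hmass : 2 * π * ∫ s in (0:ℝ)..R, s ^ (1 - 2*a) * Real.exp (g s)
      = ∫ x in ball (0 : Pl) R, ‖x‖ ^ (-(2*a)) * Real.exp (U lam a x))
    (hlt : 2 * π * ∫ s in (0:ℝ)..R, s ^ (1 - 2*a) * Real.exp (g s) < 8 * π * (1 - a)) :
    Real.log ((lam * (1 - a)) ^ 2 / (1 + lam ^ 2 / 8 * R ^ (2*(1-a))) ^ 2) ≤ g R := by
  obtain ⟨ha0, ha1⟩ := ha
  obtain ⟨hgc, hgdec, hgdiff, hbol⟩ := hg
  have hπ : (0:ℝ) < π := pi_pos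
  have h1a : (0:ℝ) < 1 - a := by linarith
  set c : ℝ := lam ^ 2 / 8 with hc
  have hcpos : 0 < c := by positivity
  have hepos : (0:ℝ) < 2 * (1 - a) := by linarith
  have hene : (2 * (1 - a) : ℝ) ≠ 0 := ne_of_gt hepos
  -- positivity of the model density
  have hden : ∀ r : ℝ, 0 ≤ r → (0:ℝ) < 1 + c * r ^ (2 * (1 - a)) := by
    intro r hr
    have : 0 ≤ c * r ^ (2 * (1 - a)) := mul_nonneg hcpos.le (Real.rpow_nonneg hr _)
    linarith
  have hXpos : ∀ r : ℝ, 0 ≤ r →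
      (0:ℝ) < (lam * (1 - a)) ^ 2 / (1 + c * r ^ (2 * (1 - a))) ^ 2 := by
    intro r hr
    have h1 := hden r hr
    have h2 : (0:ℝ) < (lam * (1 - a)) ^ 2 := by positivity
    positivity
  have hexpU : ∀ r : ℝ, 0 ≤ r →
      Real.exp (Uval lam a r) = (lam * (1 - a)) ^ 2 / (1 + c * r ^ (2 * (1 - a))) ^ 2 := by
    intro r hr
    rw [Uval, ← hc, Real.exp_log (hXpos r hr)]
  set T : ℝ := c * R ^ (2 * (1 - a)) with hT
  have hTpos : 0 < T := mul_pos hcpos (Real.rpow_pos_of_pos hR _)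
  have h1T : (0:ℝ) < 1 + T := by linarith
  -- the model mass in the ball
  set f : ℝ → ℝ := fun r => r ^ (-(2 * a)) * Real.exp (Uval lam a r) with hf
  have hball : (∫ x in ball (0 : Pl) R, ‖x‖ ^ (-(2*a)) * Real.exp (U lam a x))
      = 2 * π * (4 * (1-a) * (T / (1+T))) := by
    -- step 1: rewrite as a whole-space integral of a radial indicator function
    have h1 : (∫ x in ball (0 : Pl) R, ‖x‖ ^ (-(2*a)) * Real.exp (U lam a x))
        = ∫ x : Pl, (Set.Iio R).indicator f ‖x‖ := by
      rw [← integral_indicator measurableSet_ball]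
      congr 1
      ext x
      by_cases hx : ‖x‖ < R
      · rw [Set.indicator_of_mem (mem_ball_zero_iff.mpr hx),
          Set.indicator_of_mem (Set.mem_Iio.mpr hx)]
        rfl
      · rw [Set.indicator_of_notMem (fun h => hx (mem_ball_zero_iff.mp h))]
        exact (Set.indicator_of_notMem (fun h => hx (Set.mem_Iio.mp h)) f).symm
    rw [h1, integral_fun_norm_addHaar volume ((Set.Iio R).indicator f),
      finrank_euclideanSpace_fin]
    -- volume of unit ball
    have hvol : (volume (ball (0:Pl) 1)).toReal = π := by
      rw [EuclideanSpace.volume_ball]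
      norm_num [Real.Gamma_two, Real.sq_sqrt pi_nonneg, ENNReal.toReal_ofReal pi_nonneg]
    rw [measureReal_def, hvol]
    -- reduce the radial integral to an interval integral
    have h2 : (∫ y in Set.Ioi (0:ℝ), y ^ (2-1 : ℕ) • (Set.Iio R).indicator f y)
        = ∫ r in (0:ℝ)..R, r * f r := by
      norm_num
      have hind : ∀ y : ℝ, y * (Set.Iio R).indicator f y
          = (Set.Iio R).indicator (fun y => y * f y) y := by
        intro y; by_cases h : y ∈ Set.Iio R <;> simp [h]
      simp_rw [hind]
      rw [setIntegral_indicator measurableSet_Iio, Set.Ioi_inter_Iio,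
        intervalIntegral.integral_of_le hR.le, integral_Ioc_eq_integral_Ioo]
    rw [h2]
    -- FTC for the model integrand
    set A : ℝ → ℝ := fun r => -(4*(1-a)) * (1 + c * r ^ (2*(1-a)))⁻¹ with hA
    have hlsq : (lam * (1 - a)) ^ 2 = 8 * c * (1-a)^2 := by rw [hc]; ring
    have hAcont : ContinuousOn A (Set.Icc 0 R) := by
      refine continuousOn_const.mul (ContinuousOn.inv₀ ?_ ?_)
      · exact (continuous_const.add (continuous_const.mul
          (continuous_id.rpow_const fun x => Or.inr hepos.le))).continuousOn
      · intro x hx; exact (hden x hx.1).ne'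
    have hAderiv : ∀ r ∈ Set.Ioo (0:ℝ) R, HasDerivWithinAt A (r * f r) (Set.Ioi r) r := by
      intro r hr
      have h1' : HasDerivAt (fun r : ℝ => r ^ (2*(1-a))) (2*(1-a) * r ^ (2*(1-a)-1)) r :=
        Real.hasDerivAt_rpow_const (Or.inl hr.1.ne')
      have h2' : HasDerivAt (fun r : ℝ => 1 + c * r ^ (2*(1-a)))
          (c * (2*(1-a) * r ^ (2*(1-a)-1))) r := (h1'.const_mul c).const_add 1
      have h3' := h2'.inv (hden r hr.1.le).ne'
      have h4' := h3'.const_mul (-(4*(1-a)))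
      refine HasDerivAt.hasDerivWithinAt ?_
      refine h4'.congr_deriv ?_
      have hre : r ^ (2*(1-a)-1 : ℝ) = r * r ^ (-(2*a)) := by
        rw [show (2*(1-a)-1 : ℝ) = 1 + -(2*a) by ring, Real.rpow_add hr.1, Real.rpow_one]
      rw [hf]
      simp only []
      rw [hexpU r hr.1.le, hre, hlsq]
      have hne := (hden r hr.1.le).ne'
      field_simp
      ring
    have hIOn : IntegrableOn (fun s => s ^ (2*(1-a)-1 : ℝ) * Real.exp (Uval lam a s))
        (Set.Ioc 0 R) := by
      refine integrableOn_rpow_mul_aux (by linarith) (C := (lam*(1-a))^2) ?_ ?_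
      · refine ContinuousOn.aestronglyMeasurable ?_ measurableSet_Ioc
        refine ContinuousOn.congr
          (f := fun s : ℝ => (lam*(1-a))^2 / (1 + c * s ^ (2*(1-a)))^2) ?_ ?_
        · refine ContinuousOn.div continuousOn_const ?_ ?_
          · exact ((continuous_const.add (continuous_const.mul
              (continuous_id.rpow_const fun x => Or.inr hepos.le))).pow 2).continuousOn
          · intro x hx
            exact pow_ne_zero 2 (hden x hx.1.le).ne'
        · intro s hs
          exact hexpU s hs.1.le
      · intro s hs
        rw [abs_of_pos (Real.exp_pos _), hexpU s hs.1.le]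
        have h1' := hden s hs.1.le
        have h2' : 0 ≤ c * s ^ (2*(1-a)) := mul_nonneg hcpos.le (Real.rpow_nonneg hs.1.le _)
        have h3' : (1:ℝ) ≤ (1 + c * s ^ (2*(1-a)))^2 := by nlinarith
        calc (lam * (1 - a)) ^ 2 / (1 + c * s ^ (2 * (1 - a))) ^ 2
            ≤ (lam * (1 - a)) ^ 2 / 1 := by
              apply div_le_div_of_nonneg_left (by positivity) one_pos h3'
          _ = (lam * (1 - a)) ^ 2 := div_one _
    have hint : IntervalIntegrable (fun r => r * f r) volume 0 R := by
      refine (intervalIntegrable_iff_integrableOn_Ioc_of_le hR.le).mpr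
        (hIOn.congr_fun ?_ measurableSet_Ioc)
      intro s hs
      have hre : s ^ (2*(1-a)-1 : ℝ) = s * s ^ (-(2*a)) := by
        rw [show (2*(1-a)-1 : ℝ) = 1 + -(2*a) by ring, Real.rpow_add hs.1, Real.rpow_one]
      rw [hf]
      simp only []
      rw [hre]
      ring
    have hFTC := intervalIntegral.integral_eq_sub_of_hasDeriv_right_of_le hR.le
      hAcont hAderiv hint
    rw [hFTC, hA]
    simp only []
    rw [Real.zero_rpow hene, ← hT]
    have hne := h1T.ne'
    simp only [smul_eq_mul, nsmul_eq_mul, Nat.cast_ofNat]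
    field_simp
    ring
  -- mass of g
  set m : ℝ → ℝ := fun r => ∫ s in (0:ℝ)..r, s ^ (1 - 2*a) * Real.exp (g s) with hm
  have hmR : m R = 4 * (1-a) * (T / (1+T)) := by
    have h := hmass.trans hball
    have h2π : (2 * π : ℝ) ≠ 0 := by positivity
    exact mul_left_cancel₀ h2π h
  -- integrability of the integrand of m
  have hintg : IntegrableOn (fun s => s ^ (1 - 2*a) * Real.exp (g s)) (Set.Ioc 0 R) := by
    refine integrableOn_rpow_mul_aux (by linarith) (C := Real.exp (g 0)) ?_ ?_
    · exact ((Real.continuous_exp.comp_continuousOn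
        (hgc.mono Set.Ioc_subset_Icc_self)).aestronglyMeasurable measurableSet_Ioc)
    · intro s hs
      rw [abs_of_pos (Real.exp_pos _)]
      exact Real.exp_le_exp.2 (le_of_lt (hgdec ⟨le_refl 0, hR.le⟩ ⟨hs.1.le, hs.2⟩ hs.1))
  have hii : ∀ r ∈ Set.Icc (0:ℝ) R,
      IntervalIntegrable (fun s => s ^ (1 - 2*a) * Real.exp (g s)) volume 0 r := by
    intro r hr
    exact (intervalIntegrable_iff_integrableOn_Ioc_of_le hr.1).mpr
      (hintg.mono_set (Set.Ioc_subset_Ioc_right hr.2))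
  -- continuity and differentiability of m
  have hmc : ContinuousOn m (Set.Icc 0 R) := by
    have h1 : IntegrableOn (fun s => s ^ (1 - 2*a) * Real.exp (g s)) (Set.uIcc 0 R) := by
      rw [Set.uIcc_of_le hR.le, integrableOn_Icc_iff_integrableOn_Ioc]
      exact hintg
    have := intervalIntegral.continuousOn_primitive_interval h1
    rwa [Set.uIcc_of_le hR.le] at this
  have hcont_integrand : ContinuousOn (fun s => s ^ (1 - 2*a) * Real.exp (g s))
      (Set.Ioo (0:ℝ) R) := by
    refine ContinuousOn.mul ?_ ?_
    · intro s hs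
      exact (Real.continuousAt_rpow_const s _ (Or.inl hs.1.ne')).continuousWithinAt
    · exact Real.continuous_exp.comp_continuousOn (hgc.mono Set.Ioo_subset_Icc_self)
  have hmderiv : ∀ r ∈ Set.Ioo (0:ℝ) R,
      HasDerivAt m (r ^ (1 - 2*a) * Real.exp (g r)) r := by
    intro r hr
    refine intervalIntegral.integral_hasDerivAt_right (hii r ⟨hr.1.le, hr.2.le⟩)
      (hcont_integrand.stronglyMeasurableAtFilter isOpen_Ioo r hr) ?_
    exact ((Real.continuousAt_rpow_const r _ (Or.inl hr.1.ne')).mul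
      (Real.continuous_exp.continuousAt.comp (hgdiff r hr).continuousAt))
  have hm0 : m 0 = 0 := intervalIntegral.integral_same
  -- the comparison function Φ
  set Φ : ℝ → ℝ := fun r => r ^ (2 * (1 - a)) * Real.exp (g r)
      - 2 * (1-a) * m r + (m r) ^ 2 / 2 with hΦ
  have hΦ0 : Φ 0 = 0 := by
    simp [hΦ, hm0, Real.zero_rpow hene]
  have hΦcont : ContinuousOn Φ (Set.Icc 0 R) := by
    refine ContinuousOn.add (ContinuousOn.sub (ContinuousOn.mul ?_ ?_) ?_) ?_
    · exact (continuous_id.rpow_const (fun x => Or.inr hepos.le)).continuousOn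
    · exact Real.continuous_exp.comp_continuousOn hgc
    · exact (continuousOn_const.mul hmc)
    · exact ((hmc.pow 2).div_const 2)
  have hΦhasDeriv : ∀ r ∈ Set.Ioo (0:ℝ) R, HasDerivAt Φ
      ((2 * (1 - a) * r ^ (2 * (1 - a) - 1)) * Real.exp (g r)
        + r ^ (2 * (1 - a)) * (Real.exp (g r) * deriv g r)
        - 2 * (1-a) * (r ^ (1 - 2*a) * Real.exp (g r))
        + m r * (r ^ (1 - 2*a) * Real.exp (g r))) r := by
    intro r hr
    have h1 : HasDerivAt (fun r : ℝ => r ^ (2 * (1 - a)))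
        (2 * (1 - a) * r ^ (2 * (1 - a) - 1)) r :=
      Real.hasDerivAt_rpow_const (Or.inl hr.1.ne')
    have h2 : HasDerivAt (fun r => Real.exp (g r)) (Real.exp (g r) * deriv g r) r :=
      ((hgdiff r hr).hasDerivAt).exp
    have h3 := hmderiv r hr
    have h4 : HasDerivAt (fun r => (m r) ^ 2 / 2)
        (m r * (r ^ (1 - 2*a) * Real.exp (g r))) r := by
      have := (h3.pow 2).div_const 2
      refine this.congr_deriv ?_
      push_cast
      ring
    exact ((h1.mul h2).sub ((h3.const_mul (2 * (1-a))))).add h4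
  have hΦnonneg : ∀ r ∈ Set.Ioo (0:ℝ) R,
      0 ≤ (2 * (1 - a) * r ^ (2 * (1 - a) - 1)) * Real.exp (g r)
        + r ^ (2 * (1 - a)) * (Real.exp (g r) * deriv g r)
        - 2 * (1-a) * (r ^ (1 - 2*a) * Real.exp (g r))
        + m r * (r ^ (1 - 2*a) * Real.exp (g r)) := by
    intro r hr
    have hbr := hbol r hr
    have hbr' : 0 ≤ r * deriv g r + m r := by
      rw [hm]
      nlinarith [hπ]
    have hr1 : r ^ (2 * (1 - a) - 1) = r ^ (1 - 2*a) := by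
      congr 1; ring
    have hr2 : r ^ (2 * (1 - a)) = r * r ^ (1 - 2*a) := by
      rw [show (2 * (1 - a) : ℝ) = 1 + (1 - 2*a) by ring, Real.rpow_add hr.1, Real.rpow_one]
    rw [hr1, hr2]
    have hp1 : (0:ℝ) < r ^ (1 - 2*a) := Real.rpow_pos_of_pos hr.1 _
    have hp2 : (0:ℝ) < Real.exp (g r) := Real.exp_pos _
    nlinarith [mul_nonneg (mul_nonneg hp1.le hp2.le) hbr']
  -- Φ is monotone on [0,R], hence Φ R ≥ 0
  have hΦmono : MonotoneOn Φ (Set.Icc 0 R) := by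
    refine monotoneOn_of_deriv_nonneg (convex_Icc 0 R) hΦcont ?_ ?_
    · rw [interior_Icc]
      exact fun r hr => ((hΦhasDeriv r hr).differentiableAt).differentiableWithinAt
    · rw [interior_Icc]
      intro r hr
      rw [(hΦhasDeriv r hr).deriv]
      exact hΦnonneg r hr
  have hΦR : 0 ≤ Φ R := by
    have := hΦmono ⟨le_refl 0, hR.le⟩ ⟨hR.le, le_refl R⟩ hR.le
    rwa [hΦ0] at this
  -- conclusion
  have hρpos : (0:ℝ) < R ^ (2 * (1 - a)) := Real.rpow_pos_of_pos hR _
  have hkey : R ^ (2 * (1 - a)) * ((lam * (1 - a)) ^ 2 / (1 + c * R ^ (2 * (1 - a))) ^ 2)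
      = 2 * (1-a) * m R - (m R) ^ 2 / 2 := by
    rw [hmR]
    have hlam2 : lam ^ 2 = 8 * c := by rw [hc]; ring
    have hTc : T = c * R ^ (2 * (1 - a)) := hT
    rw [← hTc]
    have hRT : R ^ (2 * (1 - a)) = T / c := by
      rw [hTc]; field_simp
    rw [hRT, mul_pow lam (1-a) 2, hlam2]
    field_simp
    ring
  have hfin : (lam * (1 - a)) ^ 2 / (1 + c * R ^ (2 * (1 - a))) ^ 2 ≤ Real.exp (g R) := by
    have h1 : R ^ (2 * (1 - a)) * ((lam * (1 - a)) ^ 2 / (1 + c * R ^ (2 * (1 - a))) ^ 2)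
        ≤ R ^ (2 * (1 - a)) * Real.exp (g R) := by
      rw [hkey]
      have := hΦR
      rw [hΦ] at this
      linarith
    exact le_of_mul_le_mul_left h1 hρpos
  rw [Real.log_le_iff_le_exp (hXpos R hR.le)]
  exact hfin
end
end

section
/- Let β, γ ∈ ℝ with β > 8π, γ > β/(8π) − 1 and γ − 1 + β/(8π) > 0, and let r > 0 be defined by r² = ( γ + 1 − β/(8π) ) / ( γ − 1 + β/(8π) ). Then ∫_{B_r(0)} [ 4(2 − β/(4π)) / (1 + |x|²)² − 8γ (|x|² − 1) / (1 + |x|²)³ ] dx = 8π ( γ + 1 − β/(8π) )² / (4γ), where the integral is over the open ball B_r(0) ⊂ ℝ² with respect to two-dimensional Lebesgue measure. -/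
open Real MeasureTheory Metric

noncomputable section

lemma vol1_ball : (volume (ball (0:Pl) 1)).toReal = π := by
  rw [EuclideanSpace.volume_ball]
  norm_num
  exact Real.sq_sqrt pi_pos.le

/-- The total positive curvature mass for the spherical Onsager vortex problem. -/
theorem onsager_positive_mass (β γ r : ℝ) (hβ : 8*π < β)
    (hγ : β/(8*π) - 1 < γ) (hγ' : 0 < γ - 1 + β/(8*π))
    (hr : 0 < r) (hr2 : r ^ 2 = (γ + 1 - β/(8*π)) / (γ - 1 + β/(8*π))) :
    ∫ x in ball (0 : Pl) r,
        (4 * (2 - β/(4*π)) / (1 + ‖x‖ ^ 2) ^ 2 - 8 * γ * (‖x‖ ^ 2 - 1) / (1 + ‖x‖ ^ 2) ^ 3)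
      = 8 * π * (γ + 1 - β/(8*π)) ^ 2 / (4 * γ) := by
  have hπ : (0:ℝ) < π := pi_pos
  have h8π : (0:ℝ) < 8*π := by positivity
  have hb1 : 1 < β/(8*π) := (one_lt_div h8π).2 hβ
  have hγ0 : 0 < γ := lt_trans (by linarith) hγ
  have hb4 : β/(4*π) = 2*(β/(8*π)) := by
    field_simp
    ring
  rw [hb4]
  set b := β/(8*π) with hb
  clear_value b
  set g : ℝ → ℝ := fun y => 4 * (2 - 2*b) / (1 + y ^ 2) ^ 2
      - 8 * γ * (y ^ 2 - 1) / (1 + y ^ 2) ^ 3 with hg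
  set Fn : ℝ → ℝ := fun y => (4*γ - 2*(2 - 2*b))/(1 + y^2)
      - 4*γ/(1 + y^2)^2 with hFn
  have hpos : ∀ y : ℝ, (0:ℝ) < 1 + y^2 := fun y => by positivity
  have hderiv : ∀ y : ℝ, HasDerivAt Fn (y * g y) y := by
    intro y
    simp only [hFn, hg]
    have h1' : (1 + y^2) ≠ 0 := (hpos y).ne'
    have h2' : ((1 + y^2)^2) ≠ 0 := pow_ne_zero _ h1'
    have d1 : HasDerivAt (fun y : ℝ => 1 + y^2) (2*y) y := by
      simpa using ((hasDerivAt_pow 2 y).const_add 1)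
    have d2 : HasDerivAt (fun y : ℝ => (1 + y^2)^2) (2 * (1+y^2) * (2*y)) y := by
      simpa [mul_comm, mul_assoc] using (d1.fun_pow 2)
    have dA := ((hasDerivAt_const y (4*γ - 2*(2 - 2*b))).fun_div d1 h1')
    have dB := ((hasDerivAt_const y (4*γ)).fun_div d2 h2')
    have := dA.fun_sub dB
    refine this.congr_deriv ?_
    field_simp [h1']
    ring
  have hcont : Continuous fun y : ℝ => y * g y := by
    apply continuous_id.mul
    exact ((continuous_const.div (by continuity) fun y => pow_ne_zero _ (hpos y).ne').sub
      (Continuous.div (by continuity) (by continuity) fun y => pow_ne_zero _ (hpos y).ne'))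
  -- Step A: indicator
  have stepA : (∫ x in ball (0:Pl) r, g ‖x‖) = ∫ x : Pl, Set.indicator (Set.Iio r) g ‖x‖ := by
    rw [← integral_indicator measurableSet_ball]
    congr 1
    ext x
    by_cases h : ‖x‖ < r <;>
      simp [Set.indicator_apply, mem_ball_zero_iff, h]
  -- Step B: polar coordinates
  have stepB := integral_fun_norm_addHaar (volume : Measure Pl) (Set.indicator (Set.Iio r) g)
  have hdim : Module.finrank ℝ Pl = 2 := by simp
  rw [hdim, measureReal_def, vol1_ball] at stepB
  -- Step C: reduce the radial integral
  have stepC : (∫ y in Set.Ioi (0:ℝ), y ^ (2-1) • Set.indicator (Set.Iio r) g y)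
      = ∫ y in Set.Ioo (0:ℝ) r, y * g y := by
    have : ∀ y : ℝ, y ^ (2-1) • Set.indicator (Set.Iio r) g y
        = Set.indicator (Set.Iio r) (fun y => y * g y) y := by
      intro y
      by_cases h : y ∈ Set.Iio r <;> simp [Set.indicator_apply, h, smul_eq_mul]
    simp_rw [this]
    rw [integral_indicator measurableSet_Iio, Measure.restrict_restrict measurableSet_Iio,
      Set.Iio_inter_Ioi]
  -- Step D: FTC
  have stepD : (∫ y in Set.Ioo (0:ℝ) r, y * g y) = Fn r - Fn 0 := by
    rw [← integral_Ioc_eq_integral_Ioo, ← intervalIntegral.integral_of_le hr.le]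
    exact intervalIntegral.integral_eq_sub_of_hasDerivAt (fun y _ => hderiv y)
      (hcont.intervalIntegrable 0 r)
  -- assemble
  have key : (∫ x in ball (0:Pl) r, g ‖x‖) = 2 • (π • (Fn r - Fn 0)) := by
    rw [stepA, stepB, stepC, stepD]
  have hs : 1 + r^2 = 2*γ/(γ - 1 + b) := by
    rw [hr2]; field_simp; ring
  calc (∫ x in ball (0:Pl) r,
        (4 * (2 - 2*b) / (1 + ‖x‖ ^ 2) ^ 2 - 8 * γ * (‖x‖ ^ 2 - 1) / (1 + ‖x‖ ^ 2) ^ 3))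
      = 2 • (π • (Fn r - Fn 0)) := key
    _ = 8 * π * (γ + 1 - b) ^ 2 / (4 * γ) := by
        simp only [nsmul_eq_mul, smul_eq_mul, hFn, Nat.cast_ofNat]
        norm_num
        rw [hs]
        have h1 : γ - 1 + b ≠ 0 := hγ'.ne'
        have h2 : (2:ℝ)*γ ≠ 0 := by positivity
        field_simp [h1, h2]
        ring
end
end
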